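/- arXiv:1012.1777 — 7 statements merged into one kernel-verified Lean document; each statement's English description precedes it below -/
import Mathlib

section
/- Let P ≅ C_{2^s} × C₂ × C₂ with s ≥ 1, and let α be an automorphism of P of order 3. Then the fixed-point subgroup C_P(α) = {b ∈ P : α(b) = b} is cyclic of order 2^s. -/
abbrev AA (s : ℕ) : Type := ZMod (2 ^ s) × ZMod 2 × ZMod 2

set_option maxHeartbeats 2000000 in
theorem core (s : ℕ) (hs : 1 ≤ s) (F : AA s →+ AA s)
    (h3 : ∀ x, F (F (F x)) = x) (hne : ∃ x, F x ≠ x) :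
    (∃ t : AA s, F t = t ∧ addOrderOf t = 2 ^ s) ∧
    Nat.card {x : AA s // F x = x} = 2 ^ s := by
  haveI : NeZero (2 ^ s) := ⟨pow_ne_zero _ two_ne_zero⟩
  -- the "norm" map
  set N : AA s →+ AA s := AddMonoidHom.id (AA s) + F + F.comp F with hNdef
  have hN : ∀ x, N x = x + F x + F (F x) := fun x => rfl
  -- exponent
  have hexp : ∀ x : AA s, ((2:ℤ) ^ (s + 2)) • x = 0 := by
    intro x
    obtain ⟨u, v, w⟩ := x
    have h1 : (((2:ℤ) ^ (s + 2) : ℤ) : ZMod (2 ^ s)) = 0 := by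
      push_cast
      rw [pow_add]
      have : ((2 : ZMod (2 ^ s)) ^ s) = ((2 ^ s : ℕ) : ZMod (2 ^ s)) := by push_cast; ring
      rw [this, ZMod.natCast_self, zero_mul]
    have h2 : (((2:ℤ) ^ (s + 2) : ℤ) : ZMod 2) = 0 := by
      push_cast
      rw [show ((2 : ZMod 2)) = 0 from rfl, zero_pow (by omega)]
    rw [Prod.smul_mk, Prod.smul_mk, zsmul_eq_mul, zsmul_eq_mul, zsmul_eq_mul, h1, h2,
      zero_mul, zero_mul, zero_mul]
    rfl
  -- inverse of 3
  have hcop : Nat.Coprime 3 (2 ^ (s + 2)) := Nat.Coprime.pow_right _ (by decide)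
  set a : ℤ := Nat.gcdA 3 (2 ^ (s + 2)) with ha
  have hbezout : (1 : ℤ) = 3 * a + (2:ℤ) ^ (s + 2) * Nat.gcdB 3 (2 ^ (s + 2)) := by
    have := Nat.gcd_eq_gcd_ab 3 (2 ^ (s + 2))
    rw [hcop] at this
    push_cast at this ⊢
    linarith [this]
  set inv3 : AA s → AA s := fun x => a • x with hinv3def
  have hinv3 : ∀ x : AA s, (3:ℤ) • inv3 x = x := by
    intro x
    show (3:ℤ) • a • x = x
    rw [smul_smul]
    calc (3 * a) • x = ((1:ℤ) - 2 ^ (s+2) * Nat.gcdB 3 (2 ^ (s + 2))) • x := by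
          congr 1; linarith [hbezout]
      _ = x - (Nat.gcdB 3 (2 ^ (s + 2))) • (((2:ℤ) ^ (s+2)) • x) := by
          rw [sub_smul, one_smul, smul_smul, mul_comm]
      _ = x := by rw [hexp, smul_zero, sub_zero]
  have hcancel : ∀ x y : AA s, (3:ℤ) • x = (3:ℤ) • y → x = y := by
    intro x y h
    have h2 := congrArg (fun z => a • z) h
    simp only [smul_comm a (3:ℤ)] at h2
    rwa [hinv3, hinv3] at h2
  have hinv3' : ∀ t : AA s, inv3 ((3:ℤ) • t) = t := fun t => hcancel _ _ (hinv3 _)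
  have h3smul : ∀ x : AA s, (3:ℤ) • x = x + x + x := by
    intro x
    rw [show (3:ℤ) = 1 + 1 + 1 by norm_num, add_smul, add_smul, one_smul]
  -- basic facts
  have hNfix : ∀ x, F (N x) = N x := by
    intro x
    rw [hN, map_add, map_add, h3]
    abel
  have hNfixval : ∀ t, F t = t → N t = (3:ℤ) • t := by
    intro t ht
    rw [hN, ht, ht, h3smul]
  have htrivial : ∀ z, F z = z → N z = 0 → z = 0 := by
    intro z h1 h2
    have h4 : (3:ℤ) • z = (3:ℤ) • (0 : AA s) := by
      rw [smul_zero, ← hNfixval z h1, h2]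
    exact hcancel _ _ h4
  have hNN : ∀ x, N (N x) = (3:ℤ) • N x := fun x => hNfixval _ (hNfix x)
  have pf1 : ∀ x, F (inv3 (N x)) = inv3 (N x) := by
    intro x
    show F (a • N x) = a • N x
    rw [map_zsmul, hNfix]
  have pf2 : ∀ x, N (x - inv3 (N x)) = 0 := by
    intro x
    show N (x - a • N x) = 0
    rw [map_sub, map_zsmul]
    have : N (N x) = (3:ℤ) • N x := hNN x
    rw [this, smul_comm, hinv3]
    · exact sub_self _
  -- decomposition
  let φ : AA s ≃ ({x : AA s // F x = x} × {x : AA s // N x = 0}) :=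
    { toFun := fun x => (⟨inv3 (N x), pf1 x⟩, ⟨x - inv3 (N x), pf2 x⟩)
      invFun := fun p => ↑p.1 + ↑p.2
      left_inv := fun x => by simp
      right_inv := fun p => by
        obtain ⟨⟨t, ht⟩, ⟨n, hn⟩⟩ := p
        have hNt : N (t + n) = (3:ℤ) • t := by
          rw [map_add, hn, add_zero, hNfixval t ht]
        refine Prod.ext (Subtype.ext ?_) (Subtype.ext ?_)
        · show inv3 (N (t + n)) = t
          rw [hNt, hinv3']
        · show (t + n) - inv3 (N (t + n)) = n
          rw [hNt, hinv3']
          abel }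
  have hcardA : Nat.card (AA s) = 2 ^ (s + 2) := by
    show Nat.card (ZMod (2^s) × ZMod 2 × ZMod 2) = 2 ^ (s + 2)
    rw [Nat.card_prod, Nat.card_prod, Nat.card_zmod, Nat.card_zmod]
    rw [pow_succ, pow_succ]
    ring
  have hprod : 2 ^ (s + 2) =
      Nat.card {x : AA s // F x = x} * Nat.card {x : AA s // N x = 0} := by
    rw [← hcardA, Nat.card_congr φ, Nat.card_prod]
  -- squares are fixed
  have hz2 : ∀ z : ZMod 2, z + z = 0 := by decide
  set x₁ : AA s := (1, 0, 0) with hx₁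
  set fa : ZMod (2 ^ s) := (F x₁).1 with hfa
  have hstep : ∀ u : ZMod (2 ^ s), F (2 * u, 0, 0) = (2 * (u * fa), 0, 0) := by
    intro u
    have hcast : ((2 * u.val : ℕ) : ZMod (2 ^ s)) = 2 * u := by
      push_cast
      rw [ZMod.natCast_val, ZMod.cast_id]
    have hev : ∀ (k : ℕ) (z : ZMod 2), (2 * k) • z = 0 := by
      intro k z
      rw [mul_comm, mul_nsmul, two_nsmul, hz2]
    have h1 : ((2 * u : ZMod (2 ^ s)), (0 : ZMod 2), (0 : ZMod 2)) = (2 * u.val) • x₁ := by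
      refine Prod.ext ?_ (Prod.ext ?_ ?_)
      · show 2 * u = (2 * u.val) • (1 : ZMod (2 ^ s))
        rw [nsmul_eq_mul, mul_one, hcast]
      · exact (hev u.val _).symm
      · exact (hev u.val _).symm
    rw [h1, map_nsmul]
    refine Prod.ext ?_ (Prod.ext ?_ ?_)
    · show (2 * u.val) • (F x₁).1 = 2 * (u * fa)
      rw [nsmul_eq_mul, hcast, ← hfa, mul_assoc]
    · exact hev u.val _
    · exact hev u.val _
  have hval2 : ∀ z : ZMod (2 ^ s), 2 * z = 0 ↔ (2 : ℕ) ^ (s - 1) ∣ z.val := by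
    intro z
    have hzz : ((2 * z.val : ℕ) : ZMod (2 ^ s)) = 2 * z := by
      push_cast
      rw [ZMod.natCast_val, ZMod.cast_id]
    have hs2s : (2 : ℕ) ^ s = 2 * 2 ^ (s - 1) := by
      rw [← pow_succ']
      congr 1
      omega
    constructor
    · intro h
      have hzero : ((2 * z.val : ℕ) : ZMod (2 ^ s)) = 0 := hzz.trans h
      have d1 : 2 ^ s ∣ 2 * z.val := (ZMod.natCast_eq_zero_iff _ _).mp hzero
      have d2 : 2 * 2 ^ (s - 1) ∣ 2 * z.val :=
        dvd_trans (show 2 * 2 ^ (s-1) ∣ 2 ^ s from by rw [hs2s]) d1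
      exact (mul_dvd_mul_iff_left (a := (2:ℕ)) (by norm_num)).mp d2
    · intro h
      have d1 : 2 ^ s ∣ 2 * z.val :=
        dvd_trans (show (2:ℕ) ^ s ∣ 2 * 2 ^ (s-1) from by rw [hs2s]) (mul_dvd_mul_left 2 h)
      exact hzz.symm.trans ((ZMod.natCast_eq_zero_iff _ _).mpr d1)
  have hsol : ∀ u : ZMod (2 ^ s), 2 * u = 0 → u ≠ 0 →
      u = (((2 : ℕ) ^ (s - 1) : ℕ) : ZMod (2 ^ s)) := by
    intro u h2u hu0
    obtain ⟨k, hk⟩ := (hval2 u).mp h2u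
    have hlt : u.val < 2 ^ s := ZMod.val_lt u
    have hs2s : (2 : ℕ) ^ s = 2 * 2 ^ (s - 1) := by
      rw [← pow_succ']; congr 1; omega
    have hpos : 0 < (2:ℕ) ^ (s - 1) := pow_pos (by norm_num) _
    have hk2 : k < 2 := by
      by_contra hk2
      push_neg at hk2
      have : 2 * 2 ^ (s-1) ≤ u.val := by
        rw [hk]
        calc 2 * 2 ^ (s-1) = 2 ^ (s-1) * 2 := by ring
        _ ≤ 2 ^ (s-1) * k := Nat.mul_le_mul_left _ hk2
      omega
    have hval0 : u.val ≠ 0 := fun h => hu0 ((ZMod.val_eq_zero u).mp h)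
    have hk0 : k ≠ 0 := by
      rintro rfl
      rw [mul_zero] at hk
      exact hval0 hk
    have hk1 : k = 1 := by omega
    apply ZMod.val_injective
    have hlt2 : (2:ℕ) ^ (s - 1) < 2 ^ s := Nat.pow_lt_pow_right (by norm_num) (by omega)
    rw [ZMod.val_cast_of_lt hlt2, hk, hk1, mul_one]
  have h2a : 2 * fa = 2 := by
    -- first : 2 * (fa * (fa * fa)) = 2 * 1
    have hiter : F (F (F (2 * 1, 0, 0))) = ((2 * 1 : ZMod (2^s)), (0:ZMod 2), (0:ZMod 2)) :=
      h3 _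
    rw [hstep, one_mul, show (2 * fa : ZMod (2^s)) = 2 * (fa * 1) by ring] at hiter
    rw [hstep, show (2 * (fa * 1 * fa) : ZMod (2^s)) = 2 * ((fa * fa) * 1) by ring] at hiter
    rw [hstep] at hiter
    have h2a3 : 2 * (fa * fa * fa) = (2 : ZMod (2^s)) := by
      have := congrArg Prod.fst hiter
      simpa using this.trans (by norm_num)
    by_cases hs1 : s = 1
    · subst hs1
      have h20 : (2 : ZMod (2 ^ 1)) = 0 := by decide
      rw [h20, zero_mul]
    · have hs2 : 2 ≤ s := by omega
      haveI : NeZero ((2:ℕ) ^ (s - 1)) := ⟨pow_ne_zero _ two_ne_zero⟩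
      have hdvd : (2:ℕ) ^ (s - 1) ∣ 2 ^ s := pow_dvd_pow 2 (by omega)
      set π := ZMod.castHom hdvd (ZMod (2 ^ (s - 1))) with hπ
      have hπz : ∀ z : ZMod (2 ^ s), π z = 0 ↔ 2 * z = 0 := by
        intro z
        rw [hval2]
        have : π z = ((z.val : ℕ) : ZMod (2 ^ (s-1))) := by
          rw [hπ, ZMod.castHom_apply, ← ZMod.natCast_val]
        rw [this, ZMod.natCast_eq_zero_iff]
      have hcube : π fa * π fa * π fa = 1 := by
        have h0 : 2 * (fa * fa * fa - 1) = 0 := by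
          rw [mul_sub, h2a3, mul_one, sub_self]
        have := (hπz _).mpr h0
        rw [map_sub, map_one, sub_eq_zero] at this
        rw [← map_mul, ← map_mul, this]
      have hU : IsUnit (π fa) := IsUnit.of_mul_eq_one (π fa * π fa)
        (by rw [← mul_assoc]; exact hcube)
      have hu3 : hU.unit ^ 3 = 1 := by
        apply Units.ext
        rw [Units.val_pow_eq_pow_val, IsUnit.unit_spec, Units.val_one]
        rw [pow_succ, pow_two]
        exact hcube
      have hord3 : orderOf hU.unit ∣ 3 := orderOf_dvd_of_pow_eq_one hu3
      have hcardu : Fintype.card (ZMod (2 ^ (s - 1)))ˣ = 2 ^ (s - 2) := by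
        rw [ZMod.card_units_eq_totient, Nat.totient_prime_pow Nat.prime_two
          (by omega : 0 < s - 1)]
        rw [show s - 1 - 1 = s - 2 from by omega]
        norm_num
      have hordu : orderOf hU.unit ∣ 2 ^ (s - 2) := by
        rw [← hcardu]; exact orderOf_dvd_card
      have hord1 : orderOf hU.unit = 1 := by
        have hcop2 : Nat.gcd 3 ((2:ℕ) ^ (s - 2)) = 1 :=
          Nat.Coprime.pow_right _ (by decide)
        have hd := Nat.dvd_gcd hord3 hordu
        rw [hcop2] at hd
        exact Nat.dvd_one.mp hd
      have hfa1 : π fa = 1 := by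
        have h5 : (hU.unit : ZMod (2 ^ (s-1))) = 1 := by
          rw [orderOf_eq_one_iff.mp hord1, Units.val_one]
        rw [← hU.unit_spec, h5]
      have h2fa1 : 2 * (fa - 1) = 0 :=
        (hπz _).mp (by rw [map_sub, map_one, hfa1, sub_self])
      rw [mul_sub, mul_one] at h2fa1
      exact sub_eq_zero.mp h2fa1
  have hsq : ∀ x : AA s, F (x + x) = x + x := by
    intro x
    obtain ⟨u, v, w⟩ := x
    have hxx : ((u,v,w) : AA s) + (u,v,w) = (2*u, 0, 0) := by
      show ((u + u, v + v, w + w) : AA s) = (2*u, 0, 0)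
      rw [hz2 v, hz2 w, two_mul]
    rw [hxx, hstep u]
    have : 2*(u*fa) = 2*u := by
      calc 2*(u*fa) = u*(2*fa) := by ring
      _ = u*2 := by rw [h2a]
      _ = 2*u := by ring
    rw [this]
  have hKNexp : ∀ z : AA s, N z = 0 → z + z = 0 := by
    intro z hz
    exact htrivial _ (hsq z) (by rw [map_add, hz, add_zero])
  -- cardinality of the N-kernel is at most 8
  have h2u : ∀ p : {x : AA s // N x = 0}, 2 * (p : AA s).1 = 0 := by
    intro p
    have := congrArg Prod.fst (hKNexp _ p.2)
    simpa [two_mul] using this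
  set ψ : {x : AA s // N x = 0} → ZMod 2 × ZMod 2 × ZMod 2 := fun n =>
    ((if (n : AA s).1 = 0 then (0:ZMod 2) else 1), (n : AA s).2.1, (n : AA s).2.2) with hψdef
  have hinjpsi : Function.Injective ψ := by
      intro n m h
      rw [hψdef, Prod.mk.injEq, Prod.mk.injEq] at h
      obtain ⟨hh1, hh2, hh3⟩ := h
      apply Subtype.ext
      refine Prod.ext ?_ (Prod.ext hh2 hh3)
      by_cases hu : (n : AA s).1 = 0 <;> by_cases hv : (m : AA s).1 = 0
      · rw [hu, hv]
      · simp [hu, hv] at hh1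
      · simp [hu, hv] at hh1
      · rw [hsol _ (h2u n) hu, hsol _ (h2u m) hv]
  have hcNle : Nat.card {x : AA s // N x = 0} ≤ 8 := by
    have := Nat.card_le_card_of_injective _ hinjpsi
    simpa [Nat.card_prod, Nat.card_zmod] using this
  -- N-kernel is nontrivial
  have hKNnontriv : ∃ z : AA s, N z = 0 ∧ z ≠ 0 := by
    by_contra hcon
    push_neg at hcon
    obtain ⟨x, hx⟩ := hne
    apply hx
    have h0 : x - inv3 (N x) = 0 := hcon _ (pf2 x)
    have hxeq : x = inv3 (N x) := by rwa [sub_eq_zero] at h0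
    have hfix := pf1 x
    rw [← hxeq] at hfix
    exact hfix
  have hNF : ∀ z : AA s, N (F z) = F (N z) := by
    intro z
    rw [hN, hN, map_add, map_add, h3]
  have hcN3 : 3 ≤ Nat.card {x : AA s // N x = 0} := by
    obtain ⟨z, hz, hz0⟩ := hKNnontriv
    have hFz : N (F z) = 0 := by rw [hNF, hz, map_zero]
    have hFzz : F z ≠ z := fun h => hz0 (htrivial z h hz)
    have hFz0 : F z ≠ 0 := by
      intro h
      apply hz0
      have h9 := h3 z
      rw [h, map_zero, map_zero] at h9
      exact h9.symm
    classical
    have hfin : ({⟨0, by rw [map_zero]⟩, ⟨z, hz⟩, ⟨F z, hFz⟩} :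
        Finset {x : AA s // N x = 0}).card = 3 := by
      rw [Finset.card_insert_of_notMem, Finset.card_insert_of_notMem,
        Finset.card_singleton]
      · simp only [Finset.mem_singleton, Subtype.mk.injEq]
        exact fun h => hFzz h.symm
      · simp only [Finset.mem_insert, Finset.mem_singleton, Subtype.mk.injEq]
        push_neg
        exact ⟨fun h => hz0 h.symm, fun h => hFz0 h.symm⟩
    have hle := Finset.card_le_univ ({⟨0, by rw [map_zero]⟩, ⟨z, hz⟩, ⟨F z, hFz⟩} :
        Finset {x : AA s // N x = 0})
    rw [hfin] at hle
    rwa [Nat.card_eq_fintype_card]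
  have hdvdN : Nat.card {x : AA s // N x = 0} ∣ 2 ^ (s + 2) :=
    Dvd.intro_left _ hprod.symm
  obtain ⟨k, hkle, hkeq⟩ := (Nat.dvd_prime_pow Nat.prime_two).mp hdvdN
  have hk3 : k ≤ 3 := by
    by_contra hcon
    push_neg at hcon
    have h16 : 16 ≤ Nat.card {x : AA s // N x = 0} := by
      rw [hkeq]
      calc (16:ℕ) = 2 ^ 4 := by norm_num
      _ ≤ 2 ^ k := Nat.pow_le_pow_right (by norm_num) hcon
    omega
  have hk2 : 2 ≤ k := by
    by_contra hcon
    push_neg at hcon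
    have h2k : 3 ≤ 2 ^ k := hkeq ▸ hcN3
    have : (2:ℕ) ^ k ≤ 2 := by
      calc (2:ℕ) ^ k ≤ 2 ^ 1 := Nat.pow_le_pow_right (by norm_num) (by omega)
      _ = 2 := by norm_num
    omega
  -- exclude card 8
  have hcN8 : Nat.card {x : AA s // N x = 0} ≠ 8 := by
    intro h8
    by_cases hs1 : s = 1
    · -- s = 1 : N vanishes identically, rank argument
      subst hs1
      have hcT1 : Nat.card {x : AA 1 // F x = x} = 1 := by
        have h9 : (2:ℕ) ^ (1 + 2) = 8 := by norm_num
        rw [h9, h8] at hprod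
        omega
      have hsub : Subsingleton {x : AA 1 // F x = x} :=
        (Nat.card_eq_one_iff_unique.mp hcT1).1
      have htriv' : ∀ x : AA 1, F x = x → x = 0 := by
        intro x hx
        have h9 := Subsingleton.elim (⟨x, hx⟩ : {x : AA 1 // F x = x}) ⟨0, map_zero F⟩
        exact congrArg Subtype.val h9
      have hNall : ∀ x : AA 1, N x = 0 := fun x => htriv' _ (hNfix x)
      have hexp2 : ∀ x : AA 1, x + x = 0 := fun x => hKNexp x (hNall x)
      have hstep2 : ∀ p q : AA 1, p + (q + p) = q := by
        intro p q
        calc p + (q + p) = q + (p + p) := by abel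
        _ = q := by rw [hexp2, add_zero]
      have hsum0 : ∀ u v : AA 1, u + v = 0 → u = v := by
        intro u v h
        have h9 := hstep2 u v
        rw [add_comm v u, h, add_zero] at h9
        exact h9
      have hFF : ∀ x : AA 1, F (F x) = x + F x := by
        intro x
        have h9 : (x + F x) + F (F x) = 0 := by
          have := hNall x
          rwa [hN] at this
        exact (hsum0 _ _ h9).symm
      have hx10 : (x₁ : AA 1) ≠ 0 := by
        rw [hx₁]
        intro h
        have h9 := congrArg Prod.fst h
        exact absurd h9 (by decide)
      set Bp : AA 1 → Prop := fun v => v = 0 ∨ v = x₁ ∨ v = F x₁ ∨ v = x₁ + F x₁ with hBp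
      have hFB : ∀ v, Bp v → Bp (F v) := by
        intro v hv
        rcases hv with h|h|h|h
        · left; rw [h, map_zero]
        · right; right; left; rw [h]
        · right; right; right; rw [h, hFF]
        · right; left
          rw [h, map_add, hFF]
          exact hstep2 _ _
      have hy : ∃ y : AA 1, ¬ Bp y := by
        by_contra hcon
        push_neg at hcon
        classical
        have hsubset : (Finset.univ : Finset (AA 1)) ⊆ {0, x₁, F x₁, x₁ + F x₁} := by
          intro v _
          simp only [Finset.mem_insert, Finset.mem_singleton]
          exact hcon v
        have hle4 : ({0, x₁, F x₁, x₁ + F x₁} : Finset (AA 1)).card ≤ 4 := by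
          have c1 := Finset.card_insert_le (0 : AA 1) ({x₁, F x₁, x₁ + F x₁} : Finset (AA 1))
          have c2 := Finset.card_insert_le (x₁ : AA 1) ({F x₁, x₁ + F x₁} : Finset (AA 1))
          have c3 := Finset.card_insert_le (F x₁) ({x₁ + F x₁} : Finset (AA 1))
          have c4 : ({x₁ + F x₁} : Finset (AA 1)).card = 1 := Finset.card_singleton _
          omega
        have h8' : Fintype.card (AA 1) = 8 := by
          rw [← Nat.card_eq_fintype_card, hcardA]
          norm_num
        have := Finset.card_le_card hsubset
        rw [Finset.card_univ, h8'] at this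
        omega
      obtain ⟨y, hyB⟩ := hy
      have hyF : ¬ Bp (F y) := by
        intro h
        apply hyB
        have h1 := hFB _ h
        have h2 := hFB _ h1
        rwa [h3 y] at h2
      have hyFy : ¬ Bp (y + F y) := by
        intro h
        apply hyB
        have h1 := hFB _ h
        rw [map_add, hFF, hstep2] at h1
        exact h1
      have hc : ∀ (b b' : Bool) (v : AA 1),
          (cond (xor b b') v 0) = cond b v 0 + cond b' v 0 := by
        intro b b' v
        cases b <;> cases b' <;>
          simp only [Bool.xor_false, Bool.xor_true, Bool.false_xor, Bool.true_xor,
            Bool.cond_true, Bool.cond_false, Bool.not_true, Bool.not_false,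
            add_zero, zero_add]
        exact (hexp2 v).symm
      set Φ : Bool × Bool × Bool × Bool → AA 1 := fun p =>
        cond p.1 x₁ 0 + cond p.2.1 (F x₁) 0 + cond p.2.2.1 y 0 + cond p.2.2.2 (F y) 0
        with hΦ
      have hBcomb : ∀ (i j : Bool), Bp (cond i x₁ 0 + cond j (F x₁) 0) := by
        intro i j
        cases i <;> cases j <;> simp [hBp]
      have hker : ∀ p, Φ p = 0 → p = (false, false, false, false) := by
        rintro ⟨i, j, k', l⟩ hp
        rw [hΦ] at hp
        simp only at hp
        cases k' <;> cases l <;>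
          simp only [Bool.cond_true, Bool.cond_false, add_zero, zero_add] at hp
        · -- combo of x₁, F x₁ is zero
          cases i <;> cases j <;>
            simp only [Bool.cond_true, Bool.cond_false, add_zero, zero_add] at hp
          · rfl
          · -- F x₁ = 0
            exfalso
            apply hx10
            have h9 := h3 x₁
            rw [hp, map_zero, map_zero] at h9
            exact h9.symm
          · exact absurd hp hx10
          · -- x₁ + F x₁ = 0
            exfalso
            have h9 : (x₁ + F x₁) + F (F x₁) = 0 := by
              have := hNall x₁
              rwa [hN] at this
            rw [hp, zero_add] at h9
            apply hx10
            have h10 := h3 x₁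
            rw [h9, map_zero] at h10
            exact h10.symm
        · -- F y in B
          exfalso
          apply hyF
          have h9 := hsum0 _ _ hp
          rw [← h9]
          exact hBcomb i j
        · -- y in B
          exfalso
          apply hyB
          have h9 := hsum0 _ _ hp
          rw [← h9]
          exact hBcomb i j
        · -- y + F y in B
          exfalso
          apply hyFy
          rw [add_assoc] at hp
          have h9 := hsum0 _ _ hp
          rw [← h9]
          exact hBcomb i j
      have hΦxor : ∀ p q, Φ (xor p.1 q.1, xor p.2.1 q.2.1, xor p.2.2.1 q.2.2.1,
          xor p.2.2.2 q.2.2.2) = Φ p + Φ q := by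
        rintro ⟨i,j,k',l⟩ ⟨i',j',k'',l'⟩
        rw [hΦ]
        simp only
        rw [hc, hc, hc, hc]
        abel
      have hΦinj : Function.Injective Φ := by
        intro p q h
        have h0 : Φ (xor p.1 q.1, xor p.2.1 q.2.1, xor p.2.2.1 q.2.2.1,
            xor p.2.2.2 q.2.2.2) = 0 := by
          rw [hΦxor, h, hexp2]
        have h9 := hker _ h0
        have hxf : ∀ a b : Bool, xor a b = false → a = b := by decide
        obtain ⟨i,j,k',l⟩ := p
        obtain ⟨i',j',k'',l'⟩ := q
        rw [Prod.mk.injEq, Prod.mk.injEq, Prod.mk.injEq] at h9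
        obtain ⟨e1, e2, e3, e4⟩ := h9
        rw [Prod.mk.injEq, Prod.mk.injEq, Prod.mk.injEq]
        exact ⟨hxf _ _ e1, hxf _ _ e2, hxf _ _ e3, hxf _ _ e4⟩
      have h16 := Nat.card_le_card_of_injective Φ hΦinj
      have hb16 : Nat.card (Bool × Bool × Bool × Bool) = 16 := by
        simp [Nat.card_prod, Nat.card_eq_fintype_card]
      rw [hb16, hcardA] at h16
      norm_num at h16
    · -- s ≥ 2
      have hs2 : 2 ≤ s := by omega
      have hbij : Function.Bijective ψ := by
        rw [Nat.bijective_iff_injective_and_card]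
        refine ⟨hinjpsi, ?_⟩
        rw [h8]
        simp [Nat.card_prod, Nat.card_zmod]
      obtain ⟨n, hn⟩ := hbij.2 (1, 0, 0)
      rw [hψdef, Prod.mk.injEq, Prod.mk.injEq] at hn
      obtain ⟨hn1, hn2, hn3⟩ := hn
      have hu0 : (n : AA s).1 ≠ 0 := by
        intro h
        rw [if_pos h] at hn1
        exact absurd hn1 (by decide)
      have husol : (n : AA s).1 = (((2:ℕ) ^ (s-1) : ℕ) : ZMod (2 ^ s)) :=
        hsol _ (h2u n) hu0
      -- (n : AA s) is a double, hence fixed by F, hence trivial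
      set w : ZMod (2 ^ s) := (((2:ℕ) ^ (s-2) : ℕ) : ZMod (2 ^ s)) with hw
      have hnval : (n : AA s) = (w, 0, 0) + (w, 0, 0) := by
        have hpow : ((2:ℕ) ^ (s-1)) = 2 ^ (s-2) * 2 := by
          rw [← pow_succ]; congr 1; omega
        refine Prod.ext ?_ (Prod.ext ?_ ?_)
        · show (n : AA s).1 = w + w
          rw [husol, hpow, hw]
          push_cast
          ring
        · show (n : AA s).2.1 = 0 + 0
          rw [hn2, add_zero]
        · show (n : AA s).2.2 = 0 + 0
          rw [hn3, add_zero]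
      have hfixn : F (n : AA s) = (n : AA s) := by
        rw [hnval]
        exact hsq _
      have hzero : (n : AA s) = 0 := htrivial _ hfixn n.2
      apply hu0
      rw [hzero]
      rfl
  have hcN4 : Nat.card {x : AA s // N x = 0} = 4 := by
    have hk23 : k = 2 ∨ k = 3 := by omega
    rcases hk23 with rfl | rfl
    · rw [hkeq]; norm_num
    · exfalso; apply hcN8; rw [hkeq]; norm_num
  have hcT : Nat.card {x : AA s // F x = x} = 2 ^ s := by
    rw [hcN4] at hprod
    have h4 : (2:ℕ) ^ (s + 2) = 2 ^ s * 4 := by rw [pow_add]; norm_num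
    omega
  refine ⟨?_, hcT⟩
  -- produce a fixed element of order 2^s
  by_cases hs1 : s = 1
  · subst hs1
    haveI : Fact (Nat.Prime 2) := ⟨Nat.prime_two⟩
    have hexp1 : ∀ v : AA 1, v + v = 0 := by
      rintro ⟨u, v, w⟩
      have hu2 : ∀ u : ZMod (2 ^ 1), u + u = 0 := by
        intro u
        have h9 := (hval2 u).mpr (by norm_num)
        rwa [two_mul] at h9
      refine Prod.ext ?_ (Prod.ext ?_ ?_)
      · exact hu2 u
      · exact hz2 v
      · exact hz2 w
    have hnt : Nontrivial {x : AA 1 // F x = x} := by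
      apply Finite.one_lt_card_iff_nontrivial.mp
      rw [hcT]
      norm_num
    obtain ⟨⟨x, hx⟩, ⟨y, hy⟩, hxy⟩ := hnt
    refine ⟨x - y, by rw [map_sub, hx, hy], ?_⟩
    have hne0 : x - y ≠ 0 := by
      intro h
      apply hxy
      exact Subtype.ext (by rwa [sub_eq_zero] at h)
    have h2s : (2:ℕ) • (x - y) = 0 := by
      rw [two_nsmul]
      exact hexp1 _
    exact (addOrderOf_eq_prime h2s hne0).trans (pow_one 2).symm
  · have hs2 : 2 ≤ s := by omega
    set t : AA s := inv3 (N x₁) with htdef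
    have htfix : F t = t := pf1 x₁
    have hnn := pf2 x₁
    have hdn : (x₁ - t) + (x₁ - t) = 0 := hKNexp _ hnn
    have hsm : ((2:ℕ) ^ (s-1)) • t = ((2:ℕ) ^ (s-1)) • x₁ := by
      have h9 : t = x₁ - (x₁ - t) := by abel
      rw [h9, smul_sub]
      have h0 : ((2:ℕ) ^ (s-1)) • (x₁ - t) = 0 := by
        have h21 : (2:ℕ) ^ (s-1) = 2 ^ (s-2) * 2 := by
          rw [← pow_succ]; congr 1; omega
        rw [h21, mul_nsmul, two_nsmul, ← smul_add, hdn, smul_zero]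
      rw [h0, sub_zero]
    have hsx : ((2:ℕ) ^ (s-1)) • x₁ ≠ 0 := by
      intro h
      have h1 := congrArg Prod.fst h
      have h2 : ((2:ℕ) ^ (s-1)) • (1 : ZMod (2 ^ s)) = (((2:ℕ) ^ (s-1) : ℕ) : ZMod (2 ^ s)) := by
        rw [nsmul_eq_mul, mul_one]
      have h3' : (((2:ℕ) ^ (s-1) : ℕ) : ZMod (2 ^ s)) = 0 := by
        rw [← h2]
        exact h1
      rw [ZMod.natCast_eq_zero_iff] at h3'
      have hle := Nat.le_of_dvd (pow_pos (by norm_num) _) h3'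
      have hlt : (2:ℕ) ^ (s-1) < 2 ^ s := Nat.pow_lt_pow_right (by norm_num) (by omega)
      omega
    -- the fixed-point subgroup
    let KT : AddSubgroup (AA s) :=
      { carrier := {x | F x = x}
        add_mem' := by
          intro p q hp hq
          simp only [Set.mem_setOf_eq] at *
          rw [map_add, hp, hq]
        zero_mem' := map_zero F
        neg_mem' := by
          intro p hp
          simp only [Set.mem_setOf_eq] at *
          rw [map_neg, hp] }
    have hcardKT : Nat.card KT = 2 ^ s :=
      (Nat.card_congr (Equiv.subtypeEquivRight (fun x => Iff.rfl))).trans hcT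
    have hmemt : t ∈ KT := htfix
    have hot : addOrderOf (⟨t, hmemt⟩ : KT) = addOrderOf t :=
      (addOrderOf_injective KT.subtype Subtype.coe_injective ⟨t, hmemt⟩).symm
    have hdvd2 : addOrderOf t ∣ 2 ^ s := by
      have h9 := addOrderOf_dvd_natCard (⟨t, hmemt⟩ : KT)
      rwa [hcardKT, hot] at h9
    obtain ⟨k', hk'le, hk'eq⟩ := (Nat.dvd_prime_pow Nat.prime_two).mp hdvd2
    have hknot : ¬ (addOrderOf t ∣ 2 ^ (s-1)) := by
      intro hddd
      apply hsx
      rw [← hsm]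
      exact addOrderOf_dvd_iff_nsmul_eq_zero.mp hddd
    have hk's : k' = s := by
      by_contra hne'
      apply hknot
      rw [hk'eq]
      exact pow_dvd_pow 2 (by omega)
    exact ⟨t, htfix, by rw [hk'eq, hk's]⟩

theorem stmt9 (s : ℕ) (hs : 1 ≤ s)
    (P : Type*) [Group P]
    (e : P ≃* Multiplicative (ZMod (2 ^ s)) × Multiplicative (ZMod 2) ×
      Multiplicative (ZMod 2))
    (α : MulAut P) (hα : orderOf α = 3) :
    IsCyclic (α.toMonoidHom.eqLocus (MonoidHom.id P)) ∧
    Nat.card (α.toMonoidHom.eqLocus (MonoidHom.id P)) = 2 ^ s := by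
  haveI : NeZero (2 ^ s) := ⟨pow_ne_zero _ two_ne_zero⟩
  set M := (Multiplicative (ZMod (2 ^ s)) × Multiplicative (ZMod 2) ×
      Multiplicative (ZMod 2)) with hM
  let toM : AA s → M := fun x => (Multiplicative.ofAdd x.1,
    Multiplicative.ofAdd x.2.1, Multiplicative.ofAdd x.2.2)
  let toA : M → AA s := fun m => (m.1.toAdd, m.2.1.toAdd, m.2.2.toAdd)
  have hMA : ∀ x, toA (toM x) = x := fun x => rfl
  have hAM : ∀ m, toM (toA m) = m := fun m => rfl
  have htoMadd : ∀ x y, toM (x + y) = toM x * toM y := fun x y => rfl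
  have htoM0 : toM 0 = 1 := rfl
  let F : AA s →+ AA s :=
    { toFun := fun x => toA (e (α (e.symm (toM x))))
      map_zero' := by simp only [htoM0, map_one]; rfl
      map_add' := by intro x y; simp [htoMadd, map_mul]; rfl }
  have hF : ∀ x, F x = toA (e (α (e.symm (toM x)))) := fun _ => rfl
  have hα3 : ∀ p : P, α (α (α p)) = p := by
    intro p
    have h1 : α ^ 3 = 1 := by rw [← hα]; exact pow_orderOf_eq_one α
    have h2 : (α ^ 3) p = α (α (α p)) := by
      rw [pow_succ, pow_succ, pow_one]; rfl
    rw [← h2, h1]; rfl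
  have h3 : ∀ x, F (F (F x)) = x := by
    intro x
    simp only [hF, hAM, MulEquiv.symm_apply_apply, hα3, MulEquiv.apply_symm_apply]
    exact hMA x
  have hne : ∃ x, F x ≠ x := by
    have hα1 : α ≠ 1 := by
      intro h; rw [h, orderOf_one] at hα; omega
    have : ∃ p : P, α p ≠ p := by
      by_contra h
      push_neg at h
      exact hα1 (by ext p; exact h p)
    obtain ⟨p, hp⟩ := this
    refine ⟨toA (e p), ?_⟩
    simp only [hF, hAM, MulEquiv.symm_apply_apply]
    intro h
    apply hp
    have := congrArg toM h
    rw [hAM, hAM] at this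
    exact e.injective this
  obtain ⟨⟨t, htf, hto⟩, hcard⟩ := core s hs F h3 hne
  -- membership transport
  have hmem : ∀ b : P, b ∈ α.toMonoidHom.eqLocus (MonoidHom.id P) ↔ α b = b :=
    fun b => Iff.rfl
  have hmem2 : ∀ b : P, α b = b ↔ F (toA (e b)) = toA (e b) := by
    intro b
    simp only [hF, hAM, MulEquiv.symm_apply_apply]
    constructor
    · intro h; rw [h]
    · intro h
      have := congrArg toM h
      rw [hAM, hAM] at this
      exact e.injective this
  let EK := {x : AA s // F x = x}
  let eqv : ↥(α.toMonoidHom.eqLocus (MonoidHom.id P)) ≃ EK :=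
    { toFun := fun b => ⟨toA (e ↑b), (hmem2 b).1 b.2⟩
      invFun := fun x => ⟨e.symm (toM ↑x), by
        have hx := x.2
        rw [hmem ]
        have : toA (e (e.symm (toM ↑x))) = ↑x := by
          rw [MulEquiv.apply_symm_apply]; exact hMA _
        rw [hmem2, this]; exact hx⟩
      left_inv := by
        intro b; ext
        simp [hAM, MulEquiv.symm_apply_apply]
      right_inv := by
        intro x
        refine Subtype.ext ?_
        show toA (e (e.symm (toM ↑x))) = ↑x
        rw [MulEquiv.apply_symm_apply]; exact hMA _ }
  constructor
  · -- cyclic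
    haveI : Finite P := Finite.of_equiv M e.symm.toEquiv
    have hmemt : e.symm (toM t) ∈ α.toMonoidHom.eqLocus (MonoidHom.id P) := by
      rw [hmem, hmem2]
      have : toA (e (e.symm (toM t))) = t := by
        rw [MulEquiv.apply_symm_apply]; exact hMA _
      rw [this]; exact htf
    let hH : ↥(α.toMonoidHom.eqLocus (MonoidHom.id P)) := ⟨e.symm (toM t), hmemt⟩
    have horder : orderOf hH = 2 ^ s := by
      have h1 : orderOf hH = orderOf (e.symm (toM t)) :=
        (orderOf_injective (α.toMonoidHom.eqLocus (MonoidHom.id P)).subtype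
          Subtype.coe_injective hH).symm
      rw [h1]
      have h2 : orderOf (e.symm (toM t)) = orderOf (toM t) :=
        orderOf_injective e.symm.toMonoidHom e.symm.injective (toM t)
      rw [h2]
      -- orderOf (toM t) = addOrderOf t
      let μ : Multiplicative (AA s) ≃* M :=
        { toFun := fun x => toM x.toAdd
          invFun := fun m => Multiplicative.ofAdd (toA m)
          left_inv := fun x => rfl
          right_inv := fun m => rfl
          map_mul' := fun x y => rfl }
      have : toM t = μ (Multiplicative.ofAdd t) := rfl
      have h4 : orderOf (μ (Multiplicative.ofAdd t)) = orderOf (Multiplicative.ofAdd t) :=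
        orderOf_injective μ.toMonoidHom μ.injective _
      rw [this, h4, orderOf_ofAdd_eq_addOrderOf, hto]
    have hcard' : Nat.card (α.toMonoidHom.eqLocus (MonoidHom.id P)) = 2 ^ s := by
      rw [Nat.card_congr eqv, hcard]
    exact isCyclic_of_orderOf_eq_card hH (by rw [horder, hcard'])
  · rw [Nat.card_congr eqv, hcard]
end

section
/- Let G := A₄ ⋊_φ C_{2^r} with r ≥ 2, where a generator x̃ of C_{2^r} acts via an automorphism φ_{x̃} of A₄ of order 4 sending ỹ := (12)(34) to (13)(24). Then the subgroup ⟨x̃, ỹ⟩ of G is isomorphic to the Rédei group ⟨x, y | x^(2^r) = y² = [x,y]² = [x,[x,y]] = [y,[x,y]] = 1⟩, and G is not 2-nilpotent. -/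
open scoped commutatorElement


section NF
variable {G : Type*} [Group G] {x y z : G}

lemma yx_pow (hzx : Commute z x) (hyx : y * x = x * (y * z)) (a : ℕ) :
    y * x ^ a = x ^ a * (y * z ^ a) := by
  induction a with
  | zero => simp
  | succ n ih =>
    calc y * x ^ (n + 1) = (y * x) * x ^ n := by rw [pow_succ']; group
      _ = (x * (y * z)) * x ^ n := by rw [hyx]
      _ = x * (y * (z * x ^ n)) := by group
      _ = x * (y * (x ^ n * z)) := by rw [(hzx.pow_right n).eq]
      _ = x * ((y * x ^ n) * z) := by group
      _ = x * ((x ^ n * (y * z ^ n)) * z) := by rw [ih]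
      _ = x ^ (n + 1) * (y * z ^ (n + 1)) := by rw [pow_succ' x, pow_succ z]; group

lemma ypow_xpow (hzx : Commute z x) (hzy : Commute z y) (hyx : y * x = x * (y * z)) (j a : ℕ) :
    y ^ j * x ^ a = x ^ a * (y ^ j * z ^ (j * a)) := by
  induction j with
  | zero => simp
  | succ n ih =>
    calc y ^ (n + 1) * x ^ a = y ^ n * (y * x ^ a) := by rw [pow_succ]; group
      _ = y ^ n * (x ^ a * (y * z ^ a)) := by rw [yx_pow hzx hyx]
      _ = (y ^ n * x ^ a) * (y * z ^ a) := by group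
      _ = (x ^ a * (y ^ n * z ^ (n * a))) * (y * z ^ a) := by rw [ih]
      _ = x ^ a * (y ^ n * ((z ^ (n * a) * y) * z ^ a)) := by group
      _ = x ^ a * (y ^ n * ((y * z ^ (n * a)) * z ^ a)) := by rw [(hzy.pow_left (n * a)).eq]
      _ = x ^ a * (y ^ (n + 1) * z ^ ((n + 1) * a)) := by
          rw [pow_succ y, Nat.succ_mul, pow_add]; group

lemma nf_mul (hzx : Commute z x) (hzy : Commute z y) (hyx : y * x = x * (y * z))
    (i j k a b c : ℕ) :
    (x ^ i * (y ^ j * z ^ k)) * (x ^ a * (y ^ b * z ^ c)) =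
      x ^ (i + a) * (y ^ (j + b) * z ^ (j * a + (k + c))) := by
  calc (x ^ i * (y ^ j * z ^ k)) * (x ^ a * (y ^ b * z ^ c))
      = x ^ i * (y ^ j * ((z ^ k * x ^ a) * (y ^ b * z ^ c))) := by group
    _ = x ^ i * (y ^ j * ((x ^ a * z ^ k) * (y ^ b * z ^ c))) := by rw [(hzx.pow_pow k a).eq]
    _ = x ^ i * ((y ^ j * x ^ a) * ((z ^ k * y ^ b) * z ^ c)) := by group
    _ = x ^ i * ((y ^ j * x ^ a) * ((y ^ b * z ^ k) * z ^ c)) := by rw [(hzy.pow_pow k b).eq]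
    _ = x ^ i * ((x ^ a * (y ^ j * z ^ (j * a))) * ((y ^ b * z ^ k) * z ^ c)) := by
        rw [ypow_xpow hzx hzy hyx]
    _ = x ^ i * (x ^ a * (y ^ j * ((z ^ (j * a) * y ^ b) * (z ^ k * z ^ c)))) := by group
    _ = x ^ i * (x ^ a * (y ^ j * ((y ^ b * z ^ (j * a)) * (z ^ k * z ^ c)))) := by
        rw [(hzy.pow_pow (j * a) b).eq]
    _ = x ^ (i + a) * (y ^ (j + b) * z ^ (j * a + (k + c))) := by
        rw [pow_add x, pow_add y, pow_add z, pow_add z]; group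

lemma nf_inv {n : ℕ} (hzx : Commute z x) (hzy : Commute z y) (hyx : y * x = x * (y * z))
    (hx1 : x ^ n = 1) (hn : 1 ≤ n) (hy1 : y * y = 1) (hz1 : z * z = 1) (i j k : ℕ) :
    (x ^ i * (y ^ j * z ^ k))⁻¹ =
      x ^ ((n - 1) * i) * (y ^ j * z ^ (j * ((n - 1) * i) + k)) := by
  have hxinv : x⁻¹ = x ^ (n - 1) := by
    rw [inv_eq_iff_mul_eq_one, ← pow_succ', Nat.sub_add_cancel hn, hx1]
  have hyinv : y⁻¹ = y := by rw [inv_eq_iff_mul_eq_one]; exact hy1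
  have hzinv : z⁻¹ = z := by rw [inv_eq_iff_mul_eq_one]; exact hz1
  set m := (n - 1) * i with hm
  calc (x ^ i * (y ^ j * z ^ k))⁻¹
      = (z ^ k)⁻¹ * ((y ^ j)⁻¹ * (x ^ i)⁻¹) := by group
    _ = z ^ k * (y ^ j * x ^ m) := by
        rw [← inv_pow, ← inv_pow, ← inv_pow, hxinv, hyinv, hzinv, ← pow_mul]
    _ = z ^ k * (x ^ m * (y ^ j * z ^ (j * m))) := by rw [ypow_xpow hzx hzy hyx]
    _ = (z ^ k * x ^ m) * (y ^ j * z ^ (j * m)) := by group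
    _ = (x ^ m * z ^ k) * (y ^ j * z ^ (j * m)) := by rw [(hzx.pow_pow k m).eq]
    _ = x ^ m * ((z ^ k * y ^ j) * z ^ (j * m)) := by group
    _ = x ^ m * ((y ^ j * z ^ k) * z ^ (j * m)) := by rw [(hzy.pow_pow k j).eq]
    _ = x ^ m * (y ^ j * z ^ (j * m + k)) := by
        rw [mul_assoc (y ^ j), ← pow_add, Nat.add_comm k]

lemma nf_closure {n : ℕ} (hzx : Commute z x) (hzy : Commute z y) (hyx : y * x = x * (y * z))
    (hx1 : x ^ n = 1) (hn : 1 ≤ n) (hy1 : y * y = 1) (hz1 : z * z = 1)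
    {g : G} (hg : g ∈ Subgroup.closure {x, y}) :
    ∃ i j k : ℕ, g = x ^ i * (y ^ j * z ^ k) := by
  induction hg using Subgroup.closure_induction with
  | mem w hw =>
    rcases hw with rfl | rfl
    · exact ⟨1, 0, 0, by simp⟩
    · exact ⟨0, 1, 0, by simp⟩
  | one => exact ⟨0, 0, 0, by simp⟩
  | mul u v _ _ hu hv =>
    obtain ⟨i, j, k, rfl⟩ := hu
    obtain ⟨a, b, c, rfl⟩ := hv
    exact ⟨_, _, _, nf_mul hzx hzy hyx i j k a b c⟩
  | inv u _ hu =>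
    obtain ⟨i, j, k, rfl⟩ := hu
    exact ⟨_, _, _, nf_inv hzx hzy hyx hx1 hn hy1 hz1 i j k⟩

end NF


namespace RedeiAux

abbrev A4 := alternatingGroup (Fin 4)

def ty : A4 := ⟨Equiv.swap 0 1 * Equiv.swap 2 3, by rw [Equiv.Perm.mem_alternatingGroup]; decide⟩
def tz : A4 := ⟨Equiv.swap 0 2 * Equiv.swap 1 3, by rw [Equiv.Perm.mem_alternatingGroup]; decide⟩
def tw : A4 := ⟨Equiv.swap 0 3 * Equiv.swap 1 2, by rw [Equiv.Perm.mem_alternatingGroup]; decide⟩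

lemma ty_mul_ty : ty * ty = 1 := by decide
lemma tz_mul_tz : tz * tz = 1 := by decide
lemma tz_mul_tyinv : tz * ty⁻¹ = tw := by decide
lemma tw_mul_twinv : tw * tw⁻¹ = 1 := mul_inv_cancel _
lemma ty_pow_two : ty ^ 2 = 1 := by decide
lemma tw_pow_two : tw ^ 2 = 1 := by decide
lemma comm_ty_tw : ⁅ty, tw⁆ = 1 := by decide
lemma tz_ne_one : tz ≠ 1 := by decide
lemma ty_ne_tz : ty ≠ tz := by decide
lemma tw_eq_tz_mul_ty : tw = tz * ty := by decide
lemma tw_mul_tz : tw * tz = ty := by decide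
lemma ty_mul_tz : ty * tz = tw := by decide

lemma order_two_mem (a : A4) (h : a * a = 1) : a = 1 ∨ a = ty ∨ a = tz ∨ a = tw := by
  revert h; revert a; decide

lemma order_three_conj (a : A4) (h1 : a ≠ 1) (h3 : a * (a * a) = 1) :
    ∃ b : A4, ¬(b * a * b⁻¹ = 1 ∨ b * a * b⁻¹ = a ∨ b * a * b⁻¹ = a * a) := by
  revert h3; revert h1; revert a; decide

lemma order_three_sq (a : A4) (h1 : a ≠ 1) (h3 : a * (a * a) = 1) :
    ¬(a * a = 1 ∨ a * a = a) := by
  revert h3; revert h1; revert a; decide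

lemma pow_mem_fin2 : ∀ j k j' k' : Fin 2,
    ty ^ (j : ℕ) * tw ^ (k : ℕ) = ty ^ (j' : ℕ) * tw ^ (k' : ℕ) → j = j' ∧ k = k' := by decide

end RedeiAux

section SDP
variable {N G : Type*} [Group N] [Group G] {φ : G →* MulAut N}

lemma comm_inr_inl (g : G) (n : N) :
    ⁅(SemidirectProduct.inr g : N ⋊[φ] G), SemidirectProduct.inl n⁆ =
      (SemidirectProduct.inl (φ g n * n⁻¹) : N ⋊[φ] G) := by
  rw [commutatorElement_def, map_mul, SemidirectProduct.inl_aut, map_inv, map_inv]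

lemma comm_inl_inl (m n : N) :
    ⁅(SemidirectProduct.inl m : N ⋊[φ] G), SemidirectProduct.inl n⁆ =
      (SemidirectProduct.inl ⁅m, n⁆ : N ⋊[φ] G) := by
  simp [commutatorElement_def]

def sdp_equiv_prod : (N ⋊[φ] G) ≃ N × G :=
  ⟨fun g => (g.left, g.right), fun p => ⟨p.1, p.2⟩, fun _ => rfl, fun _ => rfl⟩

instance sdp_finite [Finite N] [Finite G] : Finite (N ⋊[φ] G) :=
  Finite.of_equiv _ (sdp_equiv_prod (φ := φ)).symm

end SDP



/-- The generator `x` of the free group on two letters. -/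
def gx : FreeGroup (Fin 2) := FreeGroup.of 0

/-- The generator `y` of the free group on two letters. -/
def gy : FreeGroup (Fin 2) := FreeGroup.of 1

/-- The relations of the Rédei presentation with parameters `r`, `s`:
`x^(2^r)`, `y^(2^s)`, `⁅x,y⁆^2`, `⁅x,⁅x,y⁆⁆`, `⁅y,⁅x,y⁆⁆`,
where `⁅a,b⁆ = a*b*a⁻¹*b⁻¹`. -/
def redeiRels (r s : ℕ) : Set (FreeGroup (Fin 2)) :=
  {gx ^ (2 ^ r), gy ^ (2 ^ s), ⁅gx, gy⁆ ^ 2, ⁅gx, ⁅gx, gy⁆⁆, ⁅gy, ⁅gx, gy⁆⁆}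

/-- The Rédei group `⟨x,y ∣ x^(2^r) = y^(2^s) = [x,y]^2 = [x,[x,y]] = [y,[x,y]] = 1⟩`. -/
abbrev RedeiGroup (r s : ℕ) := PresentedGroup (redeiRels r s)

/-- The image of the generator `x` in the Rédei group. -/
def Dx (r s : ℕ) : RedeiGroup r s := PresentedGroup.of 0

/-- The image of the generator `y` in the Rédei group. -/
def Dy (r s : ℕ) : RedeiGroup r s := PresentedGroup.of 1

/-- The element `z = [x,y]` of the Rédei group. -/
def Dz (r s : ℕ) : RedeiGroup r s := ⁅Dx r s, Dy r s⁆

lemma mk_rel {α : Type*} {rels : Set (FreeGroup α)} {w : FreeGroup α} (h : w ∈ rels) :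
    PresentedGroup.mk rels w = 1 :=
  (QuotientGroup.eq_one_iff w).mpr (Subgroup.subset_normalClosure h)

section RedeiFacts
variable (r : ℕ)

lemma hDx : Dx r 1 = PresentedGroup.mk (redeiRels r 1) gx := rfl
lemma hDy : Dy r 1 = PresentedGroup.mk (redeiRels r 1) gy := rfl
lemma hDz : Dz r 1 = PresentedGroup.mk (redeiRels r 1) ⁅gx, gy⁆ := by
  rw [Dz, map_commutatorElement, ← hDx, ← hDy]

lemma relX : (Dx r 1) ^ (2 ^ r) = 1 := by
  rw [hDx, ← map_pow]; exact mk_rel (by simp [redeiRels])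

lemma relY : (Dy r 1) ^ 2 = 1 := by
  show (Dy r 1) ^ (2 ^ 1) = 1
  rw [hDy, ← map_pow]; exact mk_rel (by simp [redeiRels])

lemma relZ : (Dz r 1) ^ 2 = 1 := by
  rw [hDz, ← map_pow]; exact mk_rel (by simp [redeiRels])

lemma relXZ : Commute (Dz r 1) (Dx r 1) := by
  have h : ⁅Dx r 1, Dz r 1⁆ = 1 := by
    rw [hDx, hDz, ← map_commutatorElement]; exact mk_rel (by simp [redeiRels])
  exact (commutatorElement_eq_one_iff_commute.mp h).symm

lemma relYZ : Commute (Dz r 1) (Dy r 1) := by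
  have h : ⁅Dy r 1, Dz r 1⁆ = 1 := by
    rw [hDy, hDz, ← map_commutatorElement]; exact mk_rel (by simp [redeiRels])
  exact (commutatorElement_eq_one_iff_commute.mp h).symm

lemma relYX : (Dy r 1) * (Dx r 1) = (Dx r 1) * ((Dy r 1) * (Dz r 1)) := by
  have hzi : (Dz r 1)⁻¹ = Dz r 1 := by
    rw [inv_eq_iff_mul_eq_one, ← pow_two]; exact relZ r
  have hxy : (Dz r 1) * ((Dy r 1) * (Dx r 1)) = (Dx r 1) * (Dy r 1) := by
    rw [show Dz r 1 = ⁅Dx r 1, Dy r 1⁆ from rfl, commutatorElement_def]; group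
  calc (Dy r 1) * (Dx r 1) = (Dz r 1)⁻¹ * ((Dz r 1) * ((Dy r 1) * (Dx r 1))) := by group
    _ = (Dz r 1) * ((Dx r 1) * (Dy r 1)) := by rw [hxy, hzi]
    _ = (Dx r 1) * ((Dz r 1) * (Dy r 1)) := by rw [← mul_assoc, (relXZ r).eq, mul_assoc]
    _ = (Dx r 1) * ((Dy r 1) * (Dz r 1)) := by rw [(relYZ r).eq]
end RedeiFacts

section RedeiNF
variable (r : ℕ)

lemma redei_nf (g : RedeiGroup r 1) :
    ∃ i j k : ℕ, g = (Dx r 1) ^ i * ((Dy r 1) ^ j * (Dz r 1) ^ k) := by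
  have htop : Subgroup.closure {Dx r 1, Dy r 1} = ⊤ := by
    have hro : (Set.range (PresentedGroup.of : Fin 2 → RedeiGroup r 1)) =
        {Dx r 1, Dy r 1} := by
      ext g
      simp only [Set.mem_range, Fin.exists_fin_two, Set.mem_insert_iff,
        Set.mem_singleton_iff, Dx, Dy, eq_comm]
    rw [← hro]; exact PresentedGroup.closure_range_of _
  have hg : g ∈ Subgroup.closure {Dx r 1, Dy r 1} := htop ▸ Subgroup.mem_top g
  exact nf_closure (relXZ r) (relYZ r) (relYX r) (relX r) Nat.one_le_two_pow
    (by rw [← pow_two]; exact relY r) (by rw [← pow_two]; exact relZ r) hg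

lemma redei_surj : Function.Surjective (fun p : Fin (2 ^ r) × Fin 2 × Fin 2 =>
    (Dx r 1) ^ (p.1 : ℕ) * ((Dy r 1) ^ (p.2.1 : ℕ) * (Dz r 1) ^ (p.2.2 : ℕ))) := by
  intro g
  obtain ⟨i, j, k, rfl⟩ := redei_nf r g
  refine ⟨(⟨i % 2 ^ r, Nat.mod_lt _ (Nat.two_pow_pos r)⟩,
    ⟨j % 2, Nat.mod_lt _ two_pos⟩, ⟨k % 2, Nat.mod_lt _ two_pos⟩), ?_⟩
  simp only
  rw [← pow_eq_pow_mod i (relX r), ← pow_eq_pow_mod j (relY r), ← pow_eq_pow_mod k (relZ r)]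

lemma redei_finite : Finite (RedeiGroup r 1) :=
  Finite.of_surjective _ (redei_surj r)

lemma redei_card : Nat.card (RedeiGroup r 1) ≤ 2 ^ r * (2 * 2) := by
  have h := Nat.card_le_card_of_surjective _ (redei_surj r)
  simpa using h

end RedeiNF
theorem stmt12 (r : ℕ) (hr : 2 ≤ r)
    (φ : Multiplicative (ZMod (2 ^ r)) →* MulAut (alternatingGroup (Fin 4)))
    (hord : orderOf (φ (Multiplicative.ofAdd (1 : ZMod (2 ^ r)))) = 4)
    (hact : φ (Multiplicative.ofAdd (1 : ZMod (2 ^ r)))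
        (⟨Equiv.swap 0 1 * Equiv.swap 2 3, by rw [Equiv.Perm.mem_alternatingGroup]; decide⟩ : alternatingGroup (Fin 4)) =
      (⟨Equiv.swap 0 2 * Equiv.swap 1 3, by rw [Equiv.Perm.mem_alternatingGroup]; decide⟩ : alternatingGroup (Fin 4))) :
    Nonempty
      ((Subgroup.closure
        {SemidirectProduct.inr (Multiplicative.ofAdd (1 : ZMod (2 ^ r))),
         SemidirectProduct.inl
           (⟨Equiv.swap 0 1 * Equiv.swap 2 3, by rw [Equiv.Perm.mem_alternatingGroup]; decide⟩ : alternatingGroup (Fin 4))} :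
        Subgroup (alternatingGroup (Fin 4) ⋊[φ] Multiplicative (ZMod (2 ^ r)))) ≃*
        RedeiGroup r 1) ∧
    ¬ ∃ N : Subgroup (alternatingGroup (Fin 4) ⋊[φ] Multiplicative (ZMod (2 ^ r))),
        N.Normal ∧ Odd (Nat.card N) ∧ ∃ m : ℕ, N.index = 2 ^ m := by
  classical
  haveI : NeZero (2 ^ r) := ⟨by positivity⟩
  haveI : Finite (alternatingGroup (Fin 4) ⋊[φ] Multiplicative (ZMod (2 ^ r))) := sdp_finite
  set xg : Multiplicative (ZMod (2 ^ r)) := Multiplicative.ofAdd (1 : ZMod (2 ^ r)) with hxg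
  have hAy : φ xg RedeiAux.ty = RedeiAux.tz := hact
  have hA4 : φ xg ^ 4 = 1 := by
    have h := pow_orderOf_eq_one (φ xg); rwa [hord] at h
  have hA4y : φ xg (φ xg (φ xg (φ xg RedeiAux.ty))) = RedeiAux.ty := by
    have h : (φ xg ^ 4) RedeiAux.ty = RedeiAux.ty := by rw [hA4]; rfl
    calc φ xg (φ xg (φ xg (φ xg RedeiAux.ty))) = (φ xg ^ 4) RedeiAux.ty := by
          simp [pow_succ, MulAut.mul_apply]
      _ = RedeiAux.ty := h
  have hAz : φ xg RedeiAux.tz = RedeiAux.ty := by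
    have hsq : φ xg RedeiAux.tz * φ xg RedeiAux.tz = 1 := by
      rw [← map_mul, RedeiAux.tz_mul_tz, map_one]
    rcases RedeiAux.order_two_mem _ hsq with h | h | h | h
    · exact absurd ((φ xg).injective (h.trans (map_one (φ xg)).symm)) RedeiAux.tz_ne_one
    · exact h
    · exact absurd ((φ xg).injective (hAy.trans h.symm)) RedeiAux.ty_ne_tz
    · exfalso
      have h3 : φ xg (φ xg (φ xg RedeiAux.ty)) = RedeiAux.ty := by
        rw [hAy, h, RedeiAux.tw_eq_tz_mul_ty, map_mul, h, hAy]
        exact RedeiAux.tw_mul_tz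
      have hcon : RedeiAux.tz = RedeiAux.ty :=
        calc RedeiAux.tz = φ xg RedeiAux.ty := hAy.symm
          _ = φ xg (φ xg (φ xg (φ xg RedeiAux.ty))) := by rw [h3]
          _ = RedeiAux.ty := hA4y
      exact RedeiAux.ty_ne_tz hcon.symm
  have hAw : φ xg RedeiAux.tw = RedeiAux.tw := by
    calc φ xg RedeiAux.tw = φ xg RedeiAux.tz * φ xg RedeiAux.ty := by
          rw [← map_mul, ← RedeiAux.tw_eq_tz_mul_ty]
      _ = RedeiAux.tw := by rw [hAz, hAy]; exact RedeiAux.ty_mul_tz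
  have hox : orderOf xg = 2 ^ r := by
    rw [hxg, orderOf_ofAdd_eq_addOrderOf, ZMod.addOrderOf_one]
  have hxpow : xg ^ (2 ^ r) = 1 := by
    have h := pow_orderOf_eq_one xg; rwa [hox] at h
  set f : Fin 2 → (alternatingGroup (Fin 4) ⋊[φ] Multiplicative (ZMod (2 ^ r))) :=
    ![SemidirectProduct.inr xg, SemidirectProduct.inl RedeiAux.ty] with hf
  have hf0 : f 0 = SemidirectProduct.inr xg := rfl
  have hf1 : f 1 = SemidirectProduct.inl RedeiAux.ty := rfl
  have hcommG := by
    have h := comm_inr_inl (φ := φ) xg RedeiAux.ty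
    rwa [hAy, RedeiAux.tz_mul_tyinv] at h
  have hliftx : FreeGroup.lift f gx = SemidirectProduct.inr xg := by
    rw [show gx = FreeGroup.of 0 from rfl, FreeGroup.lift_apply_of, hf0]
  have hlifty : FreeGroup.lift f gy = SemidirectProduct.inl RedeiAux.ty := by
    rw [show gy = FreeGroup.of 1 from rfl, FreeGroup.lift_apply_of, hf1]
  have hrels : ∀ w ∈ redeiRels r 1, FreeGroup.lift f w = 1 := by
    intro w hw
    simp only [redeiRels, Set.mem_insert_iff, Set.mem_singleton_iff] at hw
    rcases hw with rfl | rfl | rfl | rfl | rfl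
    · rw [map_pow, hliftx, ← map_pow, hxpow, map_one]
    · show FreeGroup.lift f (gy ^ 2) = 1
      rw [map_pow, hlifty, ← map_pow, RedeiAux.ty_pow_two, map_one]
    · rw [map_pow, map_commutatorElement, hliftx, hlifty, hcommG, ← map_pow,
        RedeiAux.tw_pow_two, map_one]
    · rw [map_commutatorElement, map_commutatorElement, hliftx, hlifty, hcommG,
        comm_inr_inl, hAw, mul_inv_cancel, map_one]
    · rw [map_commutatorElement, map_commutatorElement, hliftx, hlifty, hcommG,
        comm_inl_inl, RedeiAux.comm_ty_tw, map_one]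
  set π := PresentedGroup.toGroup hrels with hπdef
  have hπ0 : π (PresentedGroup.of 0) = SemidirectProduct.inr xg := by
    rw [hπdef, PresentedGroup.toGroup.of, hf0]
  have hπ1 : π (PresentedGroup.of 1) = SemidirectProduct.inl RedeiAux.ty := by
    rw [hπdef, PresentedGroup.toGroup.of, hf1]
  have hrange : π.range = Subgroup.closure
      {SemidirectProduct.inr xg, SemidirectProduct.inl RedeiAux.ty} := by
    rw [MonoidHom.range_eq_map, ← PresentedGroup.closure_range_of (redeiRels r 1),
      MonoidHom.map_closure]
    congr 1
    have hro : (Set.range (PresentedGroup.of : Fin 2 → RedeiGroup r 1)) =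
        {PresentedGroup.of 0, PresentedGroup.of 1} := by
      ext g
      simp only [Set.mem_range, Fin.exists_fin_two, Set.mem_insert_iff,
        Set.mem_singleton_iff, eq_comm]
    rw [hro, Set.image_insert_eq, Set.image_singleton, hπ0, hπ1]
  set H := Subgroup.closure
    {(SemidirectProduct.inr xg : ↥(alternatingGroup (Fin 4)) ⋊[φ] Multiplicative (ZMod (2 ^ r))),
     SemidirectProduct.inl RedeiAux.ty} with hHdef
  have hxH : SemidirectProduct.inr xg ∈ H := Subgroup.subset_closure (Set.mem_insert _ _)
  have hyH : SemidirectProduct.inl RedeiAux.ty ∈ H :=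
    Subgroup.subset_closure (Set.mem_insert_of_mem _ rfl)
  have hwH : SemidirectProduct.inl RedeiAux.tw ∈ H := by
    rw [← hcommG, commutatorElement_def]
    exact mul_mem (mul_mem (mul_mem hxH hyH) (inv_mem hxH)) (inv_mem hyH)
  have hmem : ∀ p : Fin (2 ^ r) × Fin 2 × Fin 2,
      SemidirectProduct.inr (xg ^ (p.1 : ℕ)) *
        SemidirectProduct.inl (RedeiAux.ty ^ (p.2.1 : ℕ) * RedeiAux.tw ^ (p.2.2 : ℕ)) ∈ H := by
    intro p
    rw [map_pow, map_mul, map_pow, map_pow]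
    exact mul_mem (pow_mem hxH _) (mul_mem (pow_mem hyH _) (pow_mem hwH _))
  have minj : Function.Injective (fun p : Fin (2 ^ r) × Fin 2 × Fin 2 =>
      (⟨_, hmem p⟩ : H)) := by
    intro p q hpq
    have h1 : SemidirectProduct.inr (xg ^ (p.1 : ℕ)) *
        SemidirectProduct.inl (RedeiAux.ty ^ (p.2.1 : ℕ) * RedeiAux.tw ^ (p.2.2 : ℕ)) =
        SemidirectProduct.inr (xg ^ (q.1 : ℕ)) *
        SemidirectProduct.inl (RedeiAux.ty ^ (q.2.1 : ℕ) * RedeiAux.tw ^ (q.2.2 : ℕ)) :=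
      congrArg Subtype.val hpq
    have hr : xg ^ (p.1 : ℕ) = xg ^ (q.1 : ℕ) := by
      have h2 := congrArg SemidirectProduct.right h1
      simp only [SemidirectProduct.mul_right, SemidirectProduct.right_inr,
        SemidirectProduct.right_inl, mul_one] at h2
      exact h2
    have hl : RedeiAux.ty ^ (p.2.1 : ℕ) * RedeiAux.tw ^ (p.2.2 : ℕ) =
        RedeiAux.ty ^ (q.2.1 : ℕ) * RedeiAux.tw ^ (q.2.2 : ℕ) := by
      have h2 := congrArg SemidirectProduct.left h1
      simp only [SemidirectProduct.mul_left, SemidirectProduct.left_inr,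
        SemidirectProduct.right_inr, SemidirectProduct.left_inl, one_mul] at h2
      rw [hr] at h2
      exact (φ (xg ^ (q.1 : ℕ))).injective h2
    have e1 : p.1 = q.1 := by
      refine Fin.ext (pow_injOn_Iio_orderOf ?_ ?_ hr)
      · rw [Set.mem_Iio, hox]; exact p.1.isLt
      · rw [Set.mem_Iio, hox]; exact q.1.isLt
    obtain ⟨e2, e3⟩ := RedeiAux.pow_mem_fin2 _ _ _ _ hl
    exact Prod.ext e1 (Prod.ext e2 e3)
  have hcardH : 2 ^ r * (2 * 2) ≤ Nat.card H := by
    have h := Nat.card_le_card_of_injective _ minj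
    simpa using h
  haveI : Finite (RedeiGroup r 1) := redei_finite r
  have hcards : Nat.card (RedeiGroup r 1) ≤ Nat.card π.range := by
    calc Nat.card (RedeiGroup r 1) ≤ 2 ^ r * (2 * 2) := redei_card r
      _ ≤ Nat.card H := hcardH
      _ = Nat.card π.range := by rw [hrange]
  have hbij := (π.rangeRestrict_surjective).bijective_of_nat_card_le hcards
  have e1 : RedeiGroup r 1 ≃* π.range := MulEquiv.ofBijective π.rangeRestrict hbij
  refine ⟨⟨(MulEquiv.subgroupCongr hrange.symm).trans e1.symm⟩, ?_⟩
  -- Part 2: not 2-nilpotent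
  rintro ⟨N, hN, hodd, m, hm⟩
  have hcardC : Nat.card (Multiplicative (ZMod (2 ^ r))) = 2 ^ r := by
    rw [Nat.card_congr Multiplicative.toAdd, Nat.card_zmod]
  have hcardG : Nat.card (alternatingGroup (Fin 4) ⋊[φ] Multiplicative (ZMod (2 ^ r)))
      = 3 * 2 ^ (r + 2) := by
    rw [Nat.card_congr (sdp_equiv_prod (φ := φ)), Nat.card_prod, hcardC]
    have h12 : Nat.card (alternatingGroup (Fin 4)) = 12 := by
      rw [Nat.card_eq_fintype_card]
      have h2 := two_mul_card_alternatingGroup (α := Fin 4)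
      rw [Fintype.card_perm, Fintype.card_fin] at h2
      have h24 : Nat.factorial 4 = 24 := rfl
      rw [h24] at h2
      omega
    rw [h12]; ring
  have hNm : Nat.card N * 2 ^ m = 3 * 2 ^ (r + 2) := by
    rw [← hm, ← hcardG]; exact Subgroup.card_mul_index N
  have h3N : 3 ∣ Nat.card N := by
    have hco : Nat.Coprime 3 (2 ^ m) := Nat.Coprime.pow_right m (by norm_num)
    exact hco.dvd_of_dvd_mul_right (hNm ▸ Dvd.intro _ rfl)
  have hN3dvd : Nat.card N ∣ 3 := by
    have hco : Nat.Coprime (Nat.card N) (2 ^ (r + 2)) :=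
      Nat.Coprime.pow_right _ hodd.coprime_two_right
    exact hco.dvd_of_dvd_mul_right ⟨2 ^ m, by rw [← hNm]⟩
  have hN3 : Nat.card N = 3 := Nat.dvd_antisymm hN3dvd h3N
  have hex : ∃ g ∈ N, g ≠ 1 := by
    by_contra hc
    push_neg at hc
    have hbot : N = ⊥ := (Subgroup.eq_bot_iff_forall N).mpr hc
    rw [hbot, Subgroup.card_bot] at hN3
    omega
  obtain ⟨g, hgN, hgne⟩ := hex
  have hg3 : g ^ 3 = 1 := by
    have h := pow_card_eq_one' (G := N) (x := ⟨g, hgN⟩)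
    rw [hN3] at h
    have h2 := congrArg Subtype.val h
    simpa using h2
  have hcr : SemidirectProduct.rightHom g = 1 := by
    have h3 : (SemidirectProduct.rightHom g) ^ 3 = 1 := by rw [← map_pow, hg3, map_one]
    have h2 : (SemidirectProduct.rightHom g) ^ (2 ^ r) = 1 := by
      have h := pow_card_eq_one' (x := SemidirectProduct.rightHom g)
      rwa [hcardC] at h
    have hd := Nat.dvd_gcd (orderOf_dvd_of_pow_eq_one h3) (orderOf_dvd_of_pow_eq_one h2)
    have hco : Nat.gcd 3 (2 ^ r) = 1 := Nat.Coprime.pow_right r (by norm_num)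
    rw [hco] at hd
    exact orderOf_eq_one_iff.mp (Nat.dvd_one.mp hd)
  have hga : g = SemidirectProduct.inl g.left := by
    refine SemidirectProduct.ext rfl ?_
    show g.right = 1
    exact hcr
  set a := g.left with hadef
  have ha1 : a ≠ 1 := fun h => hgne (by rw [hga, h, map_one])
  have ha3 : a ^ 3 = 1 := by
    have h := hg3
    rw [hga, ← map_pow] at h
    exact SemidirectProduct.inl_injective (h.trans (map_one _).symm)
  obtain ⟨b, hb⟩ := RedeiAux.order_three_conj a ha1 ha3
  push_neg at hb
  obtain ⟨hb1, hb2, hb3⟩ := hb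
  have hsq := RedeiAux.order_three_sq a ha1 ha3
  push_neg at hsq
  obtain ⟨hs1, hs2⟩ := hsq
  set n3 := SemidirectProduct.inl b * g * (SemidirectProduct.inl b)⁻¹ with hn3def
  have hn3N : n3 ∈ N := hN.conj_mem g hgN (SemidirectProduct.inl b)
  have hn3inl : n3 = SemidirectProduct.inl (b * a * b⁻¹) := by
    rw [hn3def, hga, ← map_inv, ← map_mul, ← map_mul]
  have hgg : g * g = SemidirectProduct.inl (a * a) := by
    rw [hga, ← map_mul]
  have d1 : g ≠ 1 := hgne
  have d2 : g * g ≠ 1 := by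
    rw [hgg]; intro h; exact hs1 (SemidirectProduct.inl_injective (h.trans (map_one _).symm))
  have d3 : g * g ≠ g := by
    rw [hgg, hga]; intro h; exact hs2 (SemidirectProduct.inl_injective h)
  have d4 : n3 ≠ 1 := by
    rw [hn3inl]; intro h; exact hb1 (SemidirectProduct.inl_injective (h.trans (map_one _).symm))
  have d5 : n3 ≠ g := by
    rw [hn3inl, hga]; intro h; exact hb2 (SemidirectProduct.inl_injective h)
  have d6 : n3 ≠ g * g := by
    rw [hn3inl, hgg]; intro h; exact hb3 (SemidirectProduct.inl_injective h)
  have finj : Function.Injective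
      (![⟨1, one_mem N⟩, ⟨g, hgN⟩, ⟨g * g, mul_mem hgN hgN⟩, ⟨n3, hn3N⟩] : Fin 4 → N) := by
    intro i j hij
    have h := congrArg Subtype.val hij
    fin_cases i <;> fin_cases j <;>
      simp only [Matrix.cons_val_zero, Matrix.cons_val_one, Matrix.head_cons,
        Matrix.cons_val_two, Matrix.tail_cons, Matrix.cons_val_three] at h <;>
      first
        | rfl
        | (exact absurd h.symm d1) | (exact absurd h d1)
        | (exact absurd h.symm d2) | (exact absurd h d2)
        | (exact absurd h.symm d3) | (exact absurd h d3)
        | (exact absurd h.symm d4) | (exact absurd h d4)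
        | (exact absurd h.symm d5) | (exact absurd h d5)
        | (exact absurd h.symm d6) | (exact absurd h d6)
  have hge4 : 4 ≤ Nat.card N := by
    have h := Nat.card_le_card_of_injective _ finj
    simpa using h
  omega
end

section
/- Let D = ⟨x, y | x^(2^r) = y² = [x,y]² = [x,[x,y]] = [y,[x,y]] = 1⟩ with r ≥ 2 and z := [x,y]. Then E := ⟨x^(2^(r-1)), y, z⟩ is the unique elementary abelian subgroup of D of order 8. -/
open scoped commutatorElement

namespace Stmt13Aux

/-- helper on powers -/
lemma pow_congr {G : Type*} [Group G] {g : G} {M : ℕ} (hg : g ^ M = 1) {a b : ℕ}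
    (h : a ≡ b [MOD M]) : g ^ a = g ^ b := by
  rw [pow_eq_pow_mod a hg, pow_eq_pow_mod b hg, h]

/-- The concrete model of the Rédei group with `r = n+2`, `s = 1`. -/
@[ext] structure MM (n : ℕ) where
  i : ZMod (2 ^ (n + 2))
  j : ZMod 2
  k : ZMod 2

variable {n : ℕ}

instance : NeZero (2 ^ (n + 2)) := ⟨by positivity⟩

/-- reduction mod 2 -/
def pr (n : ℕ) : ZMod (2 ^ (n + 2)) →+* ZMod 2 :=
  ZMod.castHom (dvd_pow_self 2 (by omega)) _

instance : Mul (MM n) := ⟨fun a b => ⟨a.i + b.i, a.j + b.j, a.k + b.k + a.j * pr n b.i⟩⟩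
instance : One (MM n) := ⟨⟨0, 0, 0⟩⟩
instance : Inv (MM n) := ⟨fun a => ⟨-a.i, -a.j, -a.k + a.j * pr n a.i⟩⟩

@[simp] lemma mul_def (a b : MM n) :
    a * b = ⟨a.i + b.i, a.j + b.j, a.k + b.k + a.j * pr n b.i⟩ := rfl

@[simp] lemma one_def : (1 : MM n) = ⟨0, 0, 0⟩ := rfl

@[simp] lemma inv_def (a : MM n) :
    a⁻¹ = ⟨-a.i, -a.j, -a.k + a.j * pr n a.i⟩ := rfl

instance : Group (MM n) :=
  Group.ofLeftAxioms
    (fun a b c => by ext <;> simp [map_add] <;> ring)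
    (fun a => by ext <;> simp)
    (fun a => by ext <;> simp <;> ring_nf <;> reduce_mod_char)

def mx (n : ℕ) : MM n := ⟨1, 0, 0⟩
def my (n : ℕ) : MM n := ⟨0, 1, 0⟩
def mz (n : ℕ) : MM n := ⟨0, 0, 1⟩

lemma mx_pow (m : ℕ) : (mx n) ^ m = ⟨(m : ZMod (2 ^ (n + 2))), 0, 0⟩ := by
  induction m with
  | zero => simp
  | succ m ih => rw [pow_succ, ih]; ext <;> simp [mx] <;> push_cast <;> ring

lemma my_pow (m : ℕ) : (my n) ^ m = ⟨0, (m : ZMod 2), 0⟩ := by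
  induction m with
  | zero => simp
  | succ m ih => rw [pow_succ, ih]; ext <;> simp [my] <;> push_cast <;> ring

lemma mz_pow (m : ℕ) : (mz n) ^ m = ⟨0, 0, (m : ZMod 2)⟩ := by
  induction m with
  | zero => simp
  | succ m ih => rw [pow_succ, ih]; ext <;> simp [mz] <;> push_cast <;> ring

lemma neg_one_zmod2 : (-1 : ZMod 2) = 1 := by decide

lemma comm_xy : ⁅mx n, my n⁆ = mz n := by
  ext <;>
    simp [commutatorElement_def, mx, my, mz, map_neg, map_one, neg_one_zmod2] <;>
    first
    | decide
    | ring
    | (ring_nf; decide)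

lemma comm_xz : ⁅mx n, mz n⁆ = 1 := by
  ext <;> simp [commutatorElement_def, mx, mz] <;> ring_nf <;> reduce_mod_char

lemma comm_yz : ⁅my n, mz n⁆ = 1 := by
  ext <;> simp [commutatorElement_def, my, mz] <;> ring_nf <;> reduce_mod_char

def f2 (n : ℕ) : Fin 2 → MM n := ![mx n, my n]

lemma hrels : ∀ w ∈ redeiRels (n + 2) 1, FreeGroup.lift (f2 n) w = 1 := by
  intro w hw
  simp only [redeiRels, Set.mem_insert_iff, Set.mem_singleton_iff] at hw
  have h0 : FreeGroup.lift (f2 n) gx = mx n := by simp [gx, f2]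
  have h1 : FreeGroup.lift (f2 n) gy = my n := by simp [gy, f2]
  rcases hw with rfl | rfl | rfl | rfl | rfl
  · rw [map_pow, h0, mx_pow]; ext <;> simp
  · rw [map_pow, h1, my_pow]; ext <;> simp <;> decide
  · rw [map_pow, map_commutatorElement, h0, h1, comm_xy, mz_pow]
    ext <;> simp <;> decide
  · rw [map_commutatorElement, map_commutatorElement, h0, h1, comm_xy, comm_xz]
  · rw [map_commutatorElement, map_commutatorElement, h0, h1, comm_xy, comm_yz]

def φ (n : ℕ) : RedeiGroup (n + 2) 1 →* MM n := PresentedGroup.toGroup hrels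

lemma φ_x : φ n (Dx (n + 2) 1) = mx n := by
  rw [Dx]
  exact (PresentedGroup.toGroup.of hrels).trans (by simp [f2])

lemma φ_y : φ n (Dy (n + 2) 1) = my n := by
  rw [Dy]
  exact (PresentedGroup.toGroup.of hrels).trans (by simp [f2])

lemma φ_z : φ n (Dz (n + 2) 1) = mz n := by
  rw [Dz, map_commutatorElement, φ_x, φ_y, comm_xy]

section relations
variable (r s : ℕ)

lemma rel_one {w : FreeGroup (Fin 2)} (hw : w ∈ redeiRels r s) :
    PresentedGroup.mk (redeiRels r s) w = 1 :=
  (QuotientGroup.eq_one_iff w).mpr (Subgroup.subset_normalClosure hw)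

lemma hx : (Dx r s) ^ 2 ^ r = 1 := by
  have := rel_one r s (show gx ^ 2 ^ r ∈ redeiRels r s by simp [redeiRels])
  simpa [Dx, gx, PresentedGroup.of, map_pow] using this

lemma hy : (Dy r s) ^ 2 ^ s = 1 := by
  have := rel_one r s (show gy ^ 2 ^ s ∈ redeiRels r s by simp [redeiRels])
  simpa [Dy, gy, PresentedGroup.of, map_pow] using this

lemma hz2 : (Dz r s) ^ 2 = 1 := by
  have := rel_one r s (show ⁅gx, gy⁆ ^ 2 ∈ redeiRels r s by simp [redeiRels])
  simpa [Dz, Dx, Dy, gx, gy, PresentedGroup.of, map_pow, map_commutatorElement] using this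

lemma hxz : Commute (Dx r s) (Dz r s) := by
  have := rel_one r s (show ⁅gx, ⁅gx, gy⁆⁆ ∈ redeiRels r s by simp [redeiRels])
  rw [map_commutatorElement, map_commutatorElement] at this
  exact commutatorElement_eq_one_iff_commute.mp this

lemma hyz : Commute (Dy r s) (Dz r s) := by
  have := rel_one r s (show ⁅gy, ⁅gx, gy⁆⁆ ∈ redeiRels r s by simp [redeiRels])
  rw [map_commutatorElement, map_commutatorElement] at this
  exact commutatorElement_eq_one_iff_commute.mp this

/-- `z` is central -/
lemma czg (g : RedeiGroup r s) : Commute (Dz r s) g := by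
  have htop : (⊤ : Subgroup (RedeiGroup r s)) ≤ Subgroup.centralizer {Dz r s} := by
    rw [← PresentedGroup.closure_range_of (redeiRels r s)]
    refine (Subgroup.closure_le _).mpr ?_
    rintro _ ⟨x, rfl⟩
    simp only [SetLike.mem_coe]
    rw [Subgroup.mem_centralizer_iff]
    rintro h (rfl : h = Dz r s)
    fin_cases x
    · exact ((hxz r s).symm.eq (a := Dz r s))
    · exact ((hyz r s).symm.eq (a := Dz r s))
  exact Subgroup.mem_centralizer_iff.mp (htop (Subgroup.mem_top g)) (Dz r s) rfl

lemma hyx' : Dy r s * Dx r s = Dz r s * (Dx r s * Dy r s) := by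
  have h : Dy r s * Dx r s = (Dz r s)⁻¹ * (Dx r s * Dy r s) := by
    rw [Dz, commutatorElement_def]; group
  rw [h, inv_eq_of_mul_eq_one_left (by simpa [pow_two] using hz2 r s)]

lemma hyxpow (a : ℕ) :
    Dy r s * (Dx r s) ^ a = (Dx r s) ^ a * (Dy r s * (Dz r s) ^ a) := by
  induction a with
  | zero => simp
  | succ a ih =>
    calc Dy r s * (Dx r s) ^ (a + 1)
        = (Dy r s * (Dx r s) ^ a) * Dx r s := by rw [pow_succ, ← mul_assoc]
      _ = (Dx r s) ^ a * (Dy r s * (Dz r s) ^ a) * Dx r s := by rw [ih]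
      _ = (Dx r s) ^ a * (Dy r s * ((Dz r s) ^ a * Dx r s)) := by
          simp only [mul_assoc]
      _ = (Dx r s) ^ a * (Dy r s * (Dx r s * (Dz r s) ^ a)) := by
          rw [((czg r s (Dx r s)).pow_left a).eq]
      _ = (Dx r s) ^ a * ((Dy r s * Dx r s) * (Dz r s) ^ a) := by rw [← mul_assoc (Dy r s)]
      _ = (Dx r s) ^ a * ((Dz r s * (Dx r s * Dy r s)) * (Dz r s) ^ a) := by rw [hyx']
      _ = (Dx r s) ^ (a + 1) * (Dy r s * (Dz r s) ^ (a + 1)) := by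
          rw [pow_succ, pow_succ]
          simp only [mul_assoc]
          rw [(czg r s (Dx r s)).left_comm, (czg r s (Dy r s)).left_comm,
            ((Commute.refl (Dz r s)).pow_right a).eq]

lemma hybpow (b a : ℕ) :
    (Dy r s) ^ b * (Dx r s) ^ a = (Dx r s) ^ a * ((Dy r s) ^ b * (Dz r s) ^ (a * b)) := by
  induction b with
  | zero => simp
  | succ b ih =>
    calc (Dy r s) ^ (b + 1) * (Dx r s) ^ a
        = (Dy r s) ^ b * (Dy r s * (Dx r s) ^ a) := by rw [pow_succ, mul_assoc]
      _ = (Dy r s) ^ b * ((Dx r s) ^ a * (Dy r s * (Dz r s) ^ a)) := by rw [hyxpow]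
      _ = ((Dy r s) ^ b * (Dx r s) ^ a) * (Dy r s * (Dz r s) ^ a) := by rw [← mul_assoc]
      _ = ((Dx r s) ^ a * ((Dy r s) ^ b * (Dz r s) ^ (a * b))) * (Dy r s * (Dz r s) ^ a) := by
          rw [ih]
      _ = (Dx r s) ^ a * ((Dy r s) ^ b * ((Dz r s) ^ (a * b) * (Dy r s * (Dz r s) ^ a))) := by
          simp only [mul_assoc]
      _ = (Dx r s) ^ a * ((Dy r s) ^ b * (Dy r s * ((Dz r s) ^ (a * b) * (Dz r s) ^ a))) := by
          rw [((czg r s (Dy r s)).pow_left (a * b)).left_comm]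
      _ = (Dx r s) ^ a * ((Dy r s) ^ (b + 1) * (Dz r s) ^ (a * (b + 1))) := by
          rw [← pow_add, ← mul_assoc ((Dy r s) ^ b), ← pow_succ,
            show a * b + a = a * (b + 1) by ring]

/-- the normal form of elements -/
def P (a b c : ℕ) : RedeiGroup r s := (Dx r s) ^ a * ((Dy r s) ^ b * (Dz r s) ^ c)

lemma P_mul (a b c a' b' c' : ℕ) :
    P r s a b c * P r s a' b' c' = P r s (a + a') (b + b') (c + c' + a' * b) := by
  unfold P
  calc (Dx r s) ^ a * ((Dy r s) ^ b * (Dz r s) ^ c) *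
        ((Dx r s) ^ a' * ((Dy r s) ^ b' * (Dz r s) ^ c'))
      = (Dx r s) ^ a * ((Dy r s) ^ b * ((Dz r s) ^ c *
          ((Dx r s) ^ a' * ((Dy r s) ^ b' * (Dz r s) ^ c')))) := by simp only [mul_assoc]
    _ = (Dx r s) ^ a * ((Dy r s) ^ b * ((Dx r s) ^ a' *
          ((Dy r s) ^ b' * ((Dz r s) ^ c * (Dz r s) ^ c')))) := by
        rw [((czg r s ((Dx r s) ^ a')).pow_left c).left_comm,
          ((czg r s ((Dy r s) ^ b')).pow_left c).left_comm]
    _ = (Dx r s) ^ a * (((Dy r s) ^ b * (Dx r s) ^ a') *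
          ((Dy r s) ^ b' * (Dz r s) ^ (c + c'))) := by
        rw [← pow_add]; simp only [mul_assoc]
    _ = (Dx r s) ^ a * (((Dx r s) ^ a' * ((Dy r s) ^ b * (Dz r s) ^ (a' * b))) *
          ((Dy r s) ^ b' * (Dz r s) ^ (c + c'))) := by rw [hybpow]
    _ = (Dx r s) ^ (a + a') * ((Dy r s) ^ b * ((Dz r s) ^ (a' * b) *
          ((Dy r s) ^ b' * (Dz r s) ^ (c + c')))) := by
        rw [pow_add (Dx r s) a a']; simp only [mul_assoc]
    _ = (Dx r s) ^ (a + a') * ((Dy r s) ^ b * ((Dy r s) ^ b' *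
          ((Dz r s) ^ (a' * b) * (Dz r s) ^ (c + c')))) := by
        rw [(((czg r s (Dy r s)).pow_left (a' * b)).pow_right b').left_comm]
    _ = (Dx r s) ^ (a + a') * ((Dy r s) ^ (b + b') * (Dz r s) ^ (c + c' + a' * b)) := by
        rw [← pow_add, ← mul_assoc ((Dy r s) ^ b), ← pow_add,
          show a' * b + (c + c') = c + c' + a' * b by ring]

end relations

/-- the inverse map -/
def F (n : ℕ) (m : MM n) : RedeiGroup (n + 2) 1 := P (n + 2) 1 m.i.val m.j.val m.k.val

lemma hy2 : (Dy (n + 2) 1) ^ 2 = 1 := by simpa using hy (n + 2) 1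

lemma pr_apply (t : ZMod (2 ^ (n + 2))) : pr n t = ((t.val : ℕ) : ZMod 2) := by
  rw [pr, ZMod.castHom_apply, ← ZMod.natCast_val]

lemma F_mul (a b : MM n) : F n (a * b) = F n a * F n b := by
  rw [F, F, F, mul_def, P_mul]
  unfold P
  have e1 : ((a.i + b.i).val : ℕ) ≡ a.i.val + b.i.val [MOD 2 ^ (n + 2)] := by
    rw [ZMod.val_add]; exact (Nat.mod_modEq _ _)
  have e2 : ((a.j + b.j).val : ℕ) ≡ a.j.val + b.j.val [MOD 2] := by
    rw [ZMod.val_add]; exact (Nat.mod_modEq _ _)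
  have e3 : ((a.k + b.k + a.j * pr n b.i).val : ℕ) ≡
      a.k.val + b.k.val + b.i.val * a.j.val [MOD 2] := by
    rw [ZMod.val_add, ZMod.val_add, ZMod.val_mul, pr_apply, ZMod.val_natCast]
    calc ((a.k.val + b.k.val) % 2 + a.j.val * (b.i.val % 2) % 2) % 2
        ≡ (a.k.val + b.k.val) % 2 + a.j.val * (b.i.val % 2) % 2 [MOD 2] :=
          Nat.mod_modEq _ _
      _ ≡ (a.k.val + b.k.val) + a.j.val * (b.i.val % 2) [MOD 2] :=
          Nat.ModEq.add (Nat.mod_modEq _ _) (Nat.mod_modEq _ _)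
      _ ≡ (a.k.val + b.k.val) + a.j.val * b.i.val [MOD 2] :=
          Nat.ModEq.add_left _ ((Nat.mod_modEq _ _).mul_left _)
      _ = a.k.val + b.k.val + b.i.val * a.j.val := by ring
  rw [pow_congr (hx (n + 2) 1) e1, pow_congr hy2 e2, pow_congr (hz2 (n + 2) 1) e3]

lemma φ_F (m : MM n) : φ n (F n m) = m := by
  rw [F, P, map_mul, map_mul, map_pow, map_pow, map_pow, φ_x, φ_y, φ_z,
    mx_pow, my_pow, mz_pow]
  ext <;> simp [ZMod.natCast_zmod_val]

instance : Fact (1 < 2 ^ (n + 2)) := ⟨Nat.one_lt_pow (by omega) (by omega)⟩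

def Fhom (n : ℕ) : MM n →* RedeiGroup (n + 2) 1 := MonoidHom.mk' (F n) F_mul

lemma F_x : F n (mx n) = Dx (n + 2) 1 := by
  rw [F, P]
  simp [mx, ZMod.val_one, ZMod.val_zero]

lemma F_y : F n (my n) = Dy (n + 2) 1 := by
  rw [F, P]
  simp [my, ZMod.val_one, ZMod.val_zero]

lemma F_surj : Function.Surjective (F n) := by
  intro d
  have hd : d ∈ (Fhom n).range := by
    refine PresentedGroup.generated_by (redeiRels (n + 2) 1) (Fhom n).range ?_ d
    intro j
    fin_cases j
    · exact ⟨mx n, F_x⟩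
    · exact ⟨my n, F_y⟩
  obtain ⟨m, hm⟩ := hd
  exact ⟨m, hm⟩

lemma φ_inj : Function.Injective (φ n) := by
  intro a b h
  obtain ⟨ma, rfl⟩ := F_surj a
  obtain ⟨mb, rfl⟩ := F_surj b
  rw [φ_F, φ_F] at h
  rw [h]

/-! ### The subgroup `K` of involutions of `MM n` -/

/-- shorthand for `2^(n+1)` in `ZMod (2^(n+2))` -/
def w (n : ℕ) : ZMod (2 ^ (n + 2)) := ((2 ^ (n + 1) : ℕ) : ZMod (2 ^ (n + 2)))

lemma hww : w n + w n = 0 := by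
  rw [w, ← Nat.cast_add, show 2 ^ (n + 1) + 2 ^ (n + 1) = 2 ^ (n + 2) by ring,
    ZMod.natCast_self]

lemma hw0 : w n ≠ 0 := by
  rw [w, Ne, ZMod.natCast_eq_zero_iff]
  intro hd
  have h1 := Nat.le_of_dvd (by positivity) hd
  have h2 : (2 : ℕ) ^ (n + 1) < 2 ^ (n + 2) := Nat.pow_lt_pow_right one_lt_two (by omega)
  omega

lemma pr_w : pr n (w n) = 0 := by
  rw [w, map_natCast, ZMod.natCast_eq_zero_iff]
  exact dvd_pow_self 2 (by omega)

def K (n : ℕ) : Subgroup (MM n) where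
  carrier := {m : MM n | m.i = 0 ∨ m.i = w n}
  mul_mem' := by
    rintro a b (ha | ha) (hb | hb) <;>
      simp only [Set.mem_setOf_eq, mul_def, ha, hb, add_zero, zero_add] <;>
      simp [hww]
  one_mem' := by simp
  inv_mem' := by
    rintro a (ha | ha)
    · left; show -a.i = 0; rw [ha, neg_zero]
    · right; show -a.i = w _; rw [ha]; exact neg_eq_of_add_eq_zero_left hww

lemma mem_K {m : MM n} : m ∈ K n ↔ m.i = 0 ∨ m.i = w n := Iff.rfl

lemma zmod2_add_self (t : ZMod 2) : t + t = 0 := by revert t; decide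

lemma K_sq {m : MM n} (hm : m ∈ K n) : m * m = 1 := by
  have hpr : pr n m.i = 0 := by
    rcases mem_K.mp hm with h | h <;> rw [h]
    · exact map_zero _
    · exact pr_w
  ext
  · show m.i + m.i = 0
    rcases mem_K.mp hm with h | h <;> rw [h] <;> simp [hww]
  · exact zmod2_add_self m.j
  · show m.k + m.k + m.j * pr n m.i = 0
    rw [hpr, mul_zero, add_zero]
    exact zmod2_add_self m.k
  
lemma K_mem_of_sq {m : MM n} (hm : m * m = 1) : m ∈ K n := by
  have h1 : m.i + m.i = 0 := congrArg MM.i hm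
  have hv : ((m.i.val + m.i.val : ℕ) : ZMod (2 ^ (n + 2))) = 0 := by
    rw [Nat.cast_add, ZMod.natCast_zmod_val, h1]
  have hdvd : 2 ^ (n + 2) ∣ m.i.val + m.i.val :=
    (ZMod.natCast_eq_zero_iff _ _).mp hv
  have hlt : m.i.val < 2 ^ (n + 2) := ZMod.val_lt m.i
  obtain ⟨c, hc⟩ := hdvd
  have hc2 : c < 2 := by
    by_contra hcge
    push_neg at hcge
    have : 2 ^ (n + 2) * 2 ≤ 2 ^ (n + 2) * c := Nat.mul_le_mul_left _ hcge
    omega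
  have hval : m.i.val = 0 ∨ m.i.val = 2 ^ (n + 1) := by
    have h2 : 2 ^ (n + 2) = 2 ^ (n + 1) * 2 := by ring
    interval_cases c <;> omega
  rw [mem_K, ← ZMod.natCast_zmod_val m.i, w]
  rcases hval with h | h <;> rw [h] <;> simp
  
def KEquiv (n : ℕ) : (ZMod 2 × ZMod 2 × ZMod 2) ≃ (K n) where
  toFun p := ⟨⟨if p.1 = 0 then 0 else w n, p.2.1, p.2.2⟩, by
    by_cases h : p.1 = 0 <;> simp [h, mem_K]⟩
  invFun m := (if (m : MM n).i = 0 then 0 else 1, (m : MM n).j, (m : MM n).k)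
  left_inv p := by
    obtain ⟨p1, p2, p3⟩ := p
    have hp : p1 = 0 ∨ p1 = 1 := by revert p1; decide
    rcases hp with h | h <;> subst h <;> simp [hw0]
  right_inv := by
    rintro ⟨⟨i, j, k⟩, hm⟩
    rcases mem_K.mp hm with h | h <;> subst h <;>
      simp [hw0, show (1 : ZMod 2) ≠ 0 by decide]

lemma K_card : Nat.card (K n) = 8 := by
  rw [Nat.card_congr (KEquiv n).symm]
  simp [Nat.card_prod, Nat.card_zmod]

lemma K_decomp {m : MM n} (hm : m ∈ K n) :
    m = (if m.i = 0 then 1 else ⟨w n, 0, 0⟩) * (my n ^ m.j.val * mz n ^ m.k.val) := by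
  rw [my_pow, mz_pow]
  rcases mem_K.mp hm with h | h
  · rw [if_pos h]
    ext <;> simp [h, ZMod.natCast_zmod_val]
  · rw [if_neg (h ▸ hw0)]
    ext <;> simp [h, ZMod.natCast_zmod_val, pr_w]

lemma closure_K :
    Subgroup.closure {(⟨w n, 0, 0⟩ : MM n), my n, mz n} = K n := by
  apply le_antisymm
  · rw [Subgroup.closure_le]
    rintro m (rfl | rfl | rfl) <;> rw [SetLike.mem_coe, mem_K]
    · right; rfl
    · left; rfl
    · left; rfl
  · intro m hm
    rw [K_decomp hm]
    have h1 : (⟨w n, 0, 0⟩ : MM n) ∈ Subgroup.closure {(⟨w n, 0, 0⟩ : MM n), my n, mz n} :=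
      Subgroup.subset_closure (by simp)
    have h2 : my n ∈ Subgroup.closure {(⟨w n, 0, 0⟩ : MM n), my n, mz n} :=
      Subgroup.subset_closure (by simp)
    have h3 : mz n ∈ Subgroup.closure {(⟨w n, 0, 0⟩ : MM n), my n, mz n} :=
      Subgroup.subset_closure (by simp)
    refine mul_mem ?_ (mul_mem (pow_mem h2 _) (pow_mem h3 _))
    split <;> [exact one_mem _; exact h1]

lemma K_finite : Finite (K n) := Nat.finite_of_card_ne_zero (by rw [K_card]; omega)

end Stmt13Aux

open Stmt13Aux

theorem stmt13 (r : ℕ) (hr : 2 ≤ r) :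
    (Nat.card (Subgroup.closure {(Dx r 1) ^ 2 ^ (r - 1), Dy r 1, Dz r 1} :
        Subgroup (RedeiGroup r 1)) = 8 ∧
      ∀ g ∈ (Subgroup.closure {(Dx r 1) ^ 2 ^ (r - 1), Dy r 1, Dz r 1} :
        Subgroup (RedeiGroup r 1)), g * g = 1) ∧
    ∀ H : Subgroup (RedeiGroup r 1), Nat.card H = 8 → (∀ g ∈ H, g * g = 1) →
      H = Subgroup.closure {(Dx r 1) ^ 2 ^ (r - 1), Dy r 1, Dz r 1} := by
  obtain ⟨n, rfl⟩ : ∃ n, r = n + 2 := ⟨r - 2, by omega⟩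
  have hsub : n + 2 - 1 = n + 1 := by omega
  set E : Subgroup (RedeiGroup (n + 2) 1) :=
    Subgroup.closure {(Dx (n + 2) 1) ^ 2 ^ (n + 2 - 1), Dy (n + 2) 1, Dz (n + 2) 1} with hE
  -- the image of the generating set
  have himgset : (φ n) '' {(Dx (n + 2) 1) ^ 2 ^ (n + 2 - 1), Dy (n + 2) 1, Dz (n + 2) 1} =
      {(⟨w n, 0, 0⟩ : MM n), my n, mz n} := by
    rw [hsub, Set.image_insert_eq, Set.image_insert_eq, Set.image_singleton,
      map_pow, φ_x, φ_y, φ_z, mx_pow]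
    rfl
  have hmapE : E.map (φ n) = K n := by
    rw [hE, MonoidHom.map_closure, himgset, closure_K]
  -- cardinality of E
  have hcardE : Nat.card E = 8 := by
    have h := Nat.card_congr (Subgroup.equivMapOfInjective E (φ n) φ_inj).toEquiv
    rw [h, hmapE, K_card]
  refine ⟨⟨hcardE, ?_⟩, ?_⟩
  · intro g hg
    have : φ n g ∈ E.map (φ n) := Subgroup.mem_map_of_mem _ hg
    rw [hmapE] at this
    have hsq := K_sq this
    apply φ_inj
    rw [map_mul, map_one, hsq]
  · intro H hH8 hHsq
    have hle : H.map (φ n) ≤ K n := by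
      rintro _ ⟨g, hg, rfl⟩
      refine K_mem_of_sq ?_
      rw [← map_mul, hHsq g hg, map_one]
    have hcardH : Nat.card (H.map (φ n)) = 8 := by
      rw [← hH8]
      exact (Nat.card_congr (Subgroup.equivMapOfInjective H (φ n) φ_inj).toEquiv).symm
    have hfin : ((K n : Subgroup (MM n)) : Set (MM n)).Finite := by
      have := K_finite (n := n)
      exact Set.toFinite _
    have hKeq : H.map (φ n) = K n := by
      apply SetLike.coe_injective
      apply Set.eq_of_subset_of_ncard_le hle _ hfin
      rw [← Nat.card_coe_set_eq, ← Nat.card_coe_set_eq]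
      show Nat.card (K n) ≤ Nat.card (H.map (φ n))
      rw [hcardH, K_card]
    apply Subgroup.map_injective φ_inj
    rw [hKeq, hmapE]
end

section
/- Let D = ⟨x, y | x^(2^r) = y^(2^r) = [x,y]² = [x,[x,y]] = [y,[x,y]] = 1⟩ with r ≥ 2, z := [x,y], and let α be an automorphism of D of order 3. Then z is the only nontrivial element of the center Z(D) fixed by α. -/
open scoped commutatorElement

namespace S14

def χ (k : ℕ) : ZMod (2^(k+1)) →+* ZMod 2 := ZMod.castHom (dvd_pow_self 2 k.succ_ne_zero) _

@[ext] structure G (k : ℕ) where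
  a : ZMod (2^(k+1))
  b : ZMod (2^(k+1))
  c : ZMod 2

namespace G
variable {k : ℕ}

instance : Mul (G k) := ⟨fun g h => ⟨g.a + h.a, g.b + h.b, g.c + h.c + χ k g.b * χ k h.a⟩⟩
instance : One (G k) := ⟨⟨0,0,0⟩⟩
instance : Inv (G k) := ⟨fun g => ⟨-g.a, -g.b, g.c + χ k g.b * χ k g.a⟩⟩

lemma mul_def (g h : G k) :
    g * h = ⟨g.a + h.a, g.b + h.b, g.c + h.c + χ k g.b * χ k h.a⟩ := rfl
lemma one_def : (1 : G k) = ⟨0,0,0⟩ := rfl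
lemma inv_def (g : G k) : g⁻¹ = ⟨-g.a, -g.b, g.c + χ k g.b * χ k g.a⟩ := rfl

instance : Group (G k) where
  mul_assoc g h w := by
    simp only [mul_def, map_add, G.mk.injEq]
    refine ⟨by ring, by ring, by ring⟩
  one_mul g := by simp [mul_def, one_def]
  mul_one g := by simp [mul_def, one_def]
  inv_mul_cancel g := by
    simp only [mul_def, inv_def, one_def, map_neg, G.mk.injEq]
    refine ⟨by ring, by ring, ?_⟩
    ring_nf
    rw [show (2 : ZMod 2) = 0 from rfl, mul_zero]

def xG : G k := ⟨1,0,0⟩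
def yG : G k := ⟨0,1,0⟩
def zG : G k := ⟨0,0,1⟩

lemma zmod2_cases : ∀ t : ZMod 2, t = 0 ∨ t = 1 := by decide

lemma zG_ne_one : (zG : G k) ≠ 1 := by
  intro h
  have := congrArg G.c h
  simp [zG, one_def] at this

lemma central_c (t : ZMod 2) (g : G k) : (⟨0,0,t⟩ : G k) * g = g * (⟨0,0,t⟩ : G k) := by
  simp only [mul_def, map_zero, G.mk.injEq]
  refine ⟨by ring, by ring, by ring⟩

lemma zG_central (g : G k) : zG * g = g * zG := central_c 1 g

lemma commutator_eq (g h : G k) :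
    ⁅g, h⁆ = ⟨0, 0, χ k g.b * χ k h.a - χ k g.a * χ k h.b⟩ := by
  show g * h * g⁻¹ * h⁻¹ = _
  simp only [mul_def, inv_def, map_add, map_neg, G.mk.injEq]
  refine ⟨by ring, by ring, ?_⟩
  ring_nf
  rw [show (2 : ZMod 2) = 0 from rfl]
  ring

lemma xG_pow (n : ℕ) : (xG : G k) ^ n = ⟨(n : ZMod (2^(k+1))), 0, 0⟩ := by
  induction n with
  | zero => simp [one_def]
  | succ n ih =>
    rw [pow_succ, ih]
    simp only [mul_def, xG, map_zero, map_one, G.mk.injEq, Nat.cast_succ]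
    refine ⟨trivial, by ring, by ring⟩

lemma yG_pow (n : ℕ) : (yG : G k) ^ n = ⟨0, (n : ZMod (2^(k+1))), 0⟩ := by
  induction n with
  | zero => simp [one_def]
  | succ n ih =>
    rw [pow_succ, ih]
    simp only [mul_def, yG, map_zero, map_one, G.mk.injEq, Nat.cast_succ]
    refine ⟨by ring, trivial, by ring⟩

lemma zG_pow (n : ℕ) : (zG : G k) ^ n = ⟨0, 0, (n : ZMod 2)⟩ := by
  induction n with
  | zero => simp [one_def]
  | succ n ih =>
    rw [pow_succ, ih]
    simp only [mul_def, zG, map_zero, map_one, G.mk.injEq, Nat.cast_succ]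
    refine ⟨by ring, by ring, by ring⟩

lemma normal_form (g : G k) :
    g = xG ^ (g.a.val) * yG ^ (g.b.val) * zG ^ (g.c.val) := by
  obtain ⟨a,b,c⟩ := g
  rw [xG_pow, yG_pow, zG_pow, ZMod.natCast_val, ZMod.natCast_val, ZMod.natCast_val,
    ZMod.cast_id, ZMod.cast_id, ZMod.cast_id]
  simp only [mul_def, xG, yG, zG, map_zero, map_one, G.mk.injEq]
  refine ⟨by ring, by ring, by ring⟩

lemma comm_xy : ⁅(xG : G k), (yG : G k)⁆ = (zG : G k) := by
  rw [commutator_eq]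
  simp only [xG, yG, zG, map_one, map_zero, G.mk.injEq]
  refine ⟨trivial, trivial, by decide⟩

lemma mul_a (g h : G k) : (g * h).a = g.a + h.a := rfl
lemma mul_b (g h : G k) : (g * h).b = g.b + h.b := rfl

lemma pow_a (h : G k) (n : ℕ) : (h ^ n).a = n * h.a := by
  induction n with
  | zero => simp [one_def]
  | succ n ih => simp only [pow_succ, mul_a, ih]; push_cast; ring

lemma pow_b (h : G k) (n : ℕ) : (h ^ n).b = n * h.b := by
  induction n with
  | zero => simp [one_def]
  | succ n ih => simp only [pow_succ, mul_b, ih]; push_cast; ring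

lemma zG_a : (zG : G k).a = 0 := rfl
lemma zG_b : (zG : G k).b = 0 := rfl

lemma zG_sq : (zG : G k) * zG = 1 := by
  simp only [mul_def, zG, one_def, map_zero, G.mk.injEq]
  refine ⟨by ring, by ring, by decide⟩

lemma beta_z (β : MulAut (G k)) : β zG = zG := by
  have h1 : β zG = ⁅β xG, β yG⁆ := by rw [← comm_xy, map_commutatorElement]
  rw [commutator_eq] at h1
  rcases zmod2_cases (χ k (β xG).b * χ k (β yG).a - χ k (β xG).a * χ k (β yG).b) with h|h
  · rw [h] at h1
    exfalso
    apply zG_ne_one (k := k)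
    have : β zG = β 1 := by rw [map_one]; exact h1
    exact β.injective this
  · rw [h] at h1; exact h1

lemma L1a (β : MulAut (G k)) (g : G k) :
    (β g).a = (β xG).a * g.a + (β yG).a * g.b := by
  conv_lhs => rw [G.normal_form g]
  simp only [map_mul, map_pow, beta_z β, mul_a, pow_a, zG_a]
  rw [ZMod.natCast_val, ZMod.natCast_val, ZMod.cast_id, ZMod.cast_id]
  ring

lemma L1b (β : MulAut (G k)) (g : G k) :
    (β g).b = (β xG).b * g.a + (β yG).b * g.b := by
  conv_lhs => rw [G.normal_form g]
  simp only [map_mul, map_pow, beta_z β, mul_b, pow_b, zG_b]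
  rw [ZMod.natCast_val, ZMod.natCast_val, ZMod.cast_id, ZMod.cast_id]
  ring

lemma unit_of_χ (x : ZMod (2^(k+1))) (hx : χ k x = 1) : IsUnit x := by
  have hval : ((x.val : ℕ) : ZMod 2) = 1 := by
    rwa [ZMod.natCast_val, ← ZMod.castHom_apply (h := dvd_pow_self 2 k.succ_ne_zero)]
  have hodd : x.val % 2 = 1 := by
    rcases Nat.mod_two_eq_zero_or_one x.val with h|h
    · exfalso
      rw [← ZMod.natCast_mod] at hval
      rw [h] at hval
      exact absurd hval (by decide)
    · exact h
  have hco : Nat.Coprime x.val (2^(k+1)) := by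
    apply Nat.Coprime.pow_right
    exact (Nat.coprime_comm.1 ((Nat.prime_two.coprime_iff_not_dvd).2 (by omega)))
  have := (ZMod.isUnit_iff_coprime x.val (2^(k+1))).2 hco
  rwa [ZMod.natCast_val, ZMod.cast_id] at this

lemma zmod2_main : ∀ p u q v : ZMod 2,
    p*(p*p+u*q)+u*(q*p+v*q) = 1 →
    q*(p*p+u*q)+v*(q*p+v*q) = 0 →
    p*(p*u+u*v)+u*(q*u+v*v) = 0 →
    q*(p*u+u*v)+v*(q*u+v*v) = 1 →
    ¬(p = 1 ∧ u = 0 ∧ q = 0 ∧ v = 1) →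
    (p-1)*(v-1) - u*q = 1 := by decide

lemma cube_apply (β : MulAut (G k)) (hβ : orderOf β = 3) (g : G k) :
    β (β (β g)) = g := by
  have h3 : β ^ 3 = 1 := by rw [← hβ]; exact pow_orderOf_eq_one β
  have : (β ^ 3) g = g := by rw [h3]; rfl
  rwa [pow_succ, pow_succ, pow_one, MulAut.mul_apply, MulAut.mul_apply] at this

/-- If the induced matrix is the identity, β² = 1. -/
lemma sq_eq_one (β : MulAut (G k))
    (hp : (β xG).a = 1) (hu : (β yG).a = 0) (hq : (β xG).b = 0) (hv : (β yG).b = 1) :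
    ∀ g : G k, β (β g) = g := by
  have key : ∀ g : G k, β g = g ∨ β g = g * zG := by
    intro g
    have ha : (β g).a = g.a := by rw [L1a, hp, hu]; ring
    have hb : (β g).b = g.b := by rw [L1b, hq, hv]; ring
    have hrep : β g = g * ⟨0, 0, (β g).c - g.c⟩ := by
      refine G.ext ?_ ?_ ?_
      · show (β g).a = g.a + 0
        rw [ha]; ring
      · show (β g).b = g.b + 0
        rw [hb]; ring
      · show (β g).c = g.c + ((β g).c - g.c) + χ k g.b * χ k 0
        rw [map_zero]; ring
    rcases zmod2_cases ((β g).c - g.c) with h0 | h1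
    · left; rw [hrep, h0]; exact mul_one g
    · right; rw [hrep, h1]; rfl
  intro g
  rcases key g with h | h
  · rw [h, h]
  · rw [h, map_mul, beta_z, h, mul_assoc, zG_sq, mul_one]

lemma fixed_in_ker (β : MulAut (G k)) (hβ : orderOf β = 3) (h : G k)
    (hfix : β h = h) : h = 1 ∨ h = zG := by
  obtain ⟨p, hp_def⟩ : ∃ p, (β xG).a = p := ⟨_, rfl⟩
  obtain ⟨u, hu_def⟩ : ∃ u, (β yG).a = u := ⟨_, rfl⟩
  obtain ⟨q, hq_def⟩ : ∃ q, (β xG).b = q := ⟨_, rfl⟩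
  obtain ⟨v, hv_def⟩ : ∃ v, (β yG).b = v := ⟨_, rfl⟩
  -- the cube equations
  have E1 : ∀ a b : ZMod (2^(k+1)),
      p*(p*(p*a+u*b)+u*(q*a+v*b)) + u*(q*(p*a+u*b)+v*(q*a+v*b)) = a := by
    intro a b
    have hc := congrArg G.a (cube_apply β hβ ⟨a, b, 0⟩)
    rw [L1a β (β (β ⟨a,b,0⟩)), L1a β (β ⟨a,b,0⟩), L1b β (β ⟨a,b,0⟩),
      L1a β ⟨a,b,0⟩, L1b β ⟨a,b,0⟩, hp_def, hu_def, hq_def, hv_def] at hc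
    exact hc
  have E2 : ∀ a b : ZMod (2^(k+1)),
      q*(p*(p*a+u*b)+u*(q*a+v*b)) + v*(q*(p*a+u*b)+v*(q*a+v*b)) = b := by
    intro a b
    have hc := congrArg G.b (cube_apply β hβ ⟨a, b, 0⟩)
    rw [L1b β (β (β ⟨a,b,0⟩)), L1a β (β ⟨a,b,0⟩), L1b β (β ⟨a,b,0⟩),
      L1a β ⟨a,b,0⟩, L1b β ⟨a,b,0⟩, hp_def, hu_def, hq_def, hv_def] at hc
    exact hc
  have c11 : p*(p*p+u*q)+u*(q*p+v*q) = 1 := by linear_combination E1 1 0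
  have c21 : q*(p*p+u*q)+v*(q*p+v*q) = 0 := by linear_combination E2 1 0
  have c12 : p*(p*u+u*v)+u*(q*u+v*v) = 0 := by linear_combination E1 0 1
  have c22 : q*(p*u+u*v)+v*(q*u+v*v) = 1 := by linear_combination E2 0 1
  -- mod 2 versions
  have f11 := congrArg (χ k) c11
  have f21 := congrArg (χ k) c21
  have f12 := congrArg (χ k) c12
  have f22 := congrArg (χ k) c22
  simp only [map_add, map_mul, map_one, map_zero] at f11 f21 f12 f22
  by_cases hM : χ k p = 1 ∧ χ k u = 0 ∧ χ k q = 0 ∧ χ k v = 1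
  · -- matrix is the identity mod 2 : show it is the identity, contradict orderOf β = 3
    exfalso
    obtain ⟨m1, m2, m3, m4⟩ := hM
    have hχd : χ k ((p*p+u*q+p+1)*(q*u+v*v+v+1) - (p*u+u*v+u)*(q*p+v*q+q)) = 1 := by
      simp only [map_sub, map_add, map_mul, map_one, m1, m2, m3, m4]
      decide
    have hd' := unit_of_χ _ hχd
    have hp1 : p = 1 := by
      have h0 : ((p*p+u*q+p+1)*(q*u+v*v+v+1) - (p*u+u*v+u)*(q*p+v*q+q)) * (p - 1) = 0 := by
        linear_combination (q*u+v*v+v+1) * c11 - (q*p+v*q+q) * c12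
      have := hd'.mul_left_cancel (h0.trans (mul_zero _).symm)
      linear_combination this
    have hu0 : u = 0 := by
      have h0 : ((p*p+u*q+p+1)*(q*u+v*v+v+1) - (p*u+u*v+u)*(q*p+v*q+q)) * u = 0 := by
        linear_combination (-(p*u+u*v+u)) * c11 + (p*p+u*q+p+1) * c12
      have := hd'.mul_left_cancel (h0.trans (mul_zero _).symm)
      linear_combination this
    have hq0 : q = 0 := by
      have h0 : ((p*p+u*q+p+1)*(q*u+v*v+v+1) - (p*u+u*v+u)*(q*p+v*q+q)) * q = 0 := by
        linear_combination (q*u+v*v+v+1) * c21 - (q*p+v*q+q) * c22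
      have := hd'.mul_left_cancel (h0.trans (mul_zero _).symm)
      linear_combination this
    have hv1 : v = 1 := by
      have h0 : ((p*p+u*q+p+1)*(q*u+v*v+v+1) - (p*u+u*v+u)*(q*p+v*q+q)) * (v - 1) = 0 := by
        linear_combination (-(p*u+u*v+u)) * c21 + (p*p+u*q+p+1) * c22
      have := hd'.mul_left_cancel (h0.trans (mul_zero _).symm)
      linear_combination this
    have hsq : β ^ 2 = 1 := by
      apply DFunLike.ext
      intro g
      simp only [MulAut.one_apply, pow_succ, pow_one, MulAut.mul_apply]
      exact sq_eq_one β (hp_def ▸ hp1) (hu_def ▸ hu0) (hq_def ▸ hq0) (hv_def ▸ hv1) g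
    have hdvd := orderOf_dvd_of_pow_eq_one hsq
    rw [hβ] at hdvd
    omega
  · -- matrix is not the identity mod 2 : fixed vectors vanish
    have hdet : χ k ((p-1)*(v-1) - u*q) = 1 := by
      have := zmod2_main (χ k p) (χ k u) (χ k q) (χ k v) f11 f21 f12 f22 hM
      simpa [map_sub, map_mul, map_one] using this
    have hd := unit_of_χ _ hdet
    have eA : p * h.a + u * h.b = h.a := by
      conv_rhs => rw [← hfix]
      rw [L1a β h, hp_def, hu_def]
    have eB : q * h.a + v * h.b = h.b := by
      conv_rhs => rw [← hfix]
      rw [L1b β h, hq_def, hv_def]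
    have ha0 : h.a = 0 := by
      have h0 : ((p-1)*(v-1) - u*q) * h.a = 0 := by
        linear_combination (v-1) * eA - u * eB
      exact hd.mul_left_cancel (h0.trans (mul_zero _).symm)
    have hb0 : h.b = 0 := by
      have h0 : ((p-1)*(v-1) - u*q) * h.b = 0 := by
        linear_combination (-q) * eA + (p-1) * eB
      exact hd.mul_left_cancel (h0.trans (mul_zero _).symm)
    obtain ⟨a, b, c⟩ := h
    simp only at ha0 hb0
    rcases zmod2_cases c with h0 | h1
    · left; rw [ha0, hb0, h0]; rfl
    · right; rw [ha0, hb0, h1]; rfl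

end G

section D
variable {r : ℕ}

local notation "X" => Dx r r
local notation "Y" => Dy r r
local notation "Z" => Dz r r

lemma rel_one {w : FreeGroup (Fin 2)} (hw : w ∈ redeiRels r r) :
    PresentedGroup.mk (redeiRels r r) w = 1 :=
  (QuotientGroup.eq_one_iff w).2 (Subgroup.subset_normalClosure hw)

lemma mk_gx : PresentedGroup.mk (redeiRels r r) gx = X := rfl
lemma mk_gy : PresentedGroup.mk (redeiRels r r) gy = Y := rfl

lemma hX : X ^ (2^r) = 1 := by
  have := rel_one (r := r) (w := gx ^ (2^r)) (by simp [redeiRels])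
  rwa [map_pow, mk_gx] at this

lemma hY : Y ^ (2^r) = 1 := by
  have := rel_one (r := r) (w := gy ^ (2^r)) (by simp [redeiRels])
  rwa [map_pow, mk_gy] at this

lemma hZ2 : Z ^ 2 = 1 := by
  have := rel_one (r := r) (w := ⁅gx, gy⁆ ^ 2) (by simp [redeiRels])
  rwa [map_pow, map_commutatorElement, mk_gx, mk_gy] at this

lemma hXZ : ⁅X, Z⁆ = 1 := by
  have := rel_one (r := r) (w := ⁅gx, ⁅gx, gy⁆⁆) (by simp [redeiRels])
  rwa [map_commutatorElement, map_commutatorElement, mk_gx, mk_gy] at this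

lemma hYZ : ⁅Y, Z⁆ = 1 := by
  have := rel_one (r := r) (w := ⁅gy, ⁅gx, gy⁆⁆) (by simp [redeiRels])
  rwa [map_commutatorElement, map_commutatorElement, mk_gx, mk_gy] at this

/-- Z is central. -/
lemma z_central : ∀ g : RedeiGroup r r, Z * g = g * Z := by
  intro g
  have hg : g ∈ Subgroup.centralizer {Z} := by
    apply PresentedGroup.generated_by
    intro j
    fin_cases j
    · exact Subgroup.mem_centralizer_singleton_iff.2
        (commutatorElement_eq_one_iff_commute.1 hXZ).eq
    · exact Subgroup.mem_centralizer_singleton_iff.2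
        (commutatorElement_eq_one_iff_commute.1 hYZ).eq
  exact (Subgroup.mem_centralizer_singleton_iff.1 hg).symm
lemma hZinv : (Z)⁻¹ = Z := by
  have h := hZ2 (r := r)
  rw [pow_two] at h
  exact inv_eq_of_mul_eq_one_right h

lemma commute_z (g : RedeiGroup r r) : Commute Z g := z_central g

lemma comm_YX : Y * X = X * (Y * Z) := by
  have h : Z * (Y * X) = X * Y := by
    show (Dz r r) * _ = _
    rw [Dz]
    group
  have h2 : Y * X = Z⁻¹ * (X * Y) := by rw [← h]; group
  rw [hZinv] at h2
  rw [h2, z_central (X * Y)]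
  group

lemma Yx (a : ℕ) : Y * X^a = X^a * (Y * Z^a) := by
  induction a with
  | zero => simp
  | succ a ih =>
    have h1 : Y * X^(a+1) = (Y * X^a) * X := by group
    rw [h1, ih]
    have h2 : Z^a * X = X * Z^a := ((commute_z X).pow_left a).eq
    calc X^a * (Y * Z^a) * X = X^a * (Y * (Z^a * X)) := by group
    _ = X^a * (Y * (X * Z^a)) := by rw [h2]
    _ = X^a * ((Y * X) * Z^a) := by group
    _ = X^a * ((X * (Y * Z)) * Z^a) := by rw [comm_YX]
    _ = X^(a+1) * (Y * Z^(a+1)) := by group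

lemma N1 (a b : ℕ) : Y^b * X^a = X^a * (Y^b * Z^(a*b)) := by
  induction b with
  | zero => simp
  | succ b ih =>
    calc Y^(b+1) * X^a = Y^b * (Y * X^a) := by group
    _ = Y^b * (X^a * (Y * Z^a)) := by rw [Yx]
    _ = (Y^b * X^a) * (Y * Z^a) := by group
    _ = (X^a * (Y^b * Z^(a*b))) * (Y * Z^a) := by rw [ih]
    _ = X^a * (Y^b * ((Z^(a*b) * Y) * Z^a)) := by group
    _ = X^a * (Y^b * ((Y * Z^(a*b)) * Z^a)) := by
          rw [((commute_z Y).pow_left (a*b)).eq]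
    _ = X^a * (Y^(b+1) * Z^(a*b + a)) := by group
    _ = X^a * (Y^(b+1) * Z^(a*(b+1))) := by rw [Nat.mul_succ]

lemma mulNF (a b c a' b' c' : ℕ) :
    (X^a * Y^b * Z^c) * (X^a' * Y^b' * Z^c') =
      X^(a+a') * Y^(b+b') * Z^(a'*b + c + c') := by
  calc (X^a * Y^b * Z^c) * (X^a' * Y^b' * Z^c')
      = X^a * (Y^b * ((Z^c * X^a') * (Y^b' * Z^c'))) := by group
  _ = X^a * (Y^b * ((X^a' * Z^c) * (Y^b' * Z^c'))) := by
        rw [((commute_z (X^a')).pow_left c).eq]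
  _ = X^a * ((Y^b * X^a') * ((Z^c * Y^b') * Z^c')) := by group
  _ = X^a * ((X^a' * (Y^b * Z^(a'*b))) * ((Y^b' * Z^c) * Z^c')) := by
        rw [N1, ((commute_z (Y^b')).pow_left c).eq]
  _ = X^(a+a') * (Y^b * ((Z^(a'*b) * Y^b') * (Z^c * Z^c'))) := by group
  _ = X^(a+a') * (Y^b * ((Y^b' * Z^(a'*b)) * (Z^c * Z^c'))) := by
        rw [((commute_z (Y^b')).pow_left (a'*b)).eq]
  _ = X^(a+a') * Y^(b+b') * Z^(a'*b + c + c') := by group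

lemma pow_exp_one (a : ℕ) : X^(a * 2^r) = 1 := by
  rw [mul_comm, pow_mul, hX, one_pow]

lemma pow_exp_one_Y (b : ℕ) : Y^(b * 2^r) = 1 := by
  rw [mul_comm, pow_mul, hY, one_pow]

lemma pow_exp_one_Z (c : ℕ) : Z^(c * 2) = 1 := by
  rw [mul_comm, pow_mul, hZ2, one_pow]

lemma invNF (a b c : ℕ) :
    (X^a * Y^b * Z^c)⁻¹ =
      X^(a*(2^r - 1)) * Y^(b*(2^r - 1)) * Z^((a*(2^r - 1))*b + c) := by
  symm
  apply eq_inv_of_mul_eq_one_left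
  rw [mulNF]
  obtain ⟨t, ht⟩ : ∃ t, 2^r = t + 1 := ⟨2^r - 1, by have := Nat.one_le_two_pow (n := r); omega⟩
  have ha : a*(2^r - 1) + a = a * 2^r := by rw [ht]; simp only [Nat.add_sub_cancel]; ring
  have hb : b*(2^r - 1) + b = b * 2^r := by rw [ht]; simp only [Nat.add_sub_cancel]; ring
  have hc : a * (b*(2^r - 1)) + (a*(2^r - 1)*b + c) + c = (a*(2^r-1)*b + c) * 2 := by ring
  rw [ha, hb, hc, pow_exp_one, pow_exp_one_Y, pow_exp_one_Z, one_mul, one_mul]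

/-- Every element of the Rédei group has a normal form. -/
lemma normal_form_D (g : RedeiGroup r r) : ∃ a b c : ℕ, g = X^a * Y^b * Z^c := by
  have : g ∈ (⟨⟨⟨{g | ∃ a b c : ℕ, g = X^a * Y^b * Z^c},
      by rintro g h ⟨a,b,c,rfl⟩ ⟨a',b',c',rfl⟩; exact ⟨_,_,_, mulNF a b c a' b' c'⟩⟩,
      ⟨0,0,0, by simp⟩⟩,
      by rintro g ⟨a,b,c,rfl⟩; exact ⟨_,_,_, invNF a b c⟩⟩ :
      Subgroup (RedeiGroup r r)) := by
    apply PresentedGroup.generated_by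
    intro j
    fin_cases j
    · exact ⟨1, 0, 0, by simp; rfl⟩
    · exact ⟨0, 1, 0, by simp; rfl⟩
  exact this

end D
section Glue
variable (k : ℕ)

local notation "X" => Dx (k+1) (k+1)
local notation "Y" => Dy (k+1) (k+1)
local notation "Z" => Dz (k+1) (k+1)

open G

def fGen : Fin 2 → G k := ![xG, yG]

lemma hrels : ∀ w ∈ redeiRels (k+1) (k+1), FreeGroup.lift (fGen k) w = 1 := by
  intro w hw
  have hlx : FreeGroup.lift (fGen k) gx = xG := by
    show FreeGroup.lift (fGen k) (FreeGroup.of 0) = xG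
    rw [FreeGroup.lift_apply_of]; rfl
  have hly : FreeGroup.lift (fGen k) gy = yG := by
    show FreeGroup.lift (fGen k) (FreeGroup.of 1) = yG
    rw [FreeGroup.lift_apply_of]; rfl
  have hxp : (xG : G k) ^ (2^(k+1)) = 1 := by
    rw [xG_pow, ZMod.natCast_self]; rfl
  have hyp : (yG : G k) ^ (2^(k+1)) = 1 := by
    rw [yG_pow, ZMod.natCast_self]; rfl
  have hz2 : (zG : G k) ^ 2 = 1 := by rw [pow_two]; exact zG_sq
  have hxz : ⁅(xG : G k), (zG : G k)⁆ = 1 := by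
    rw [commutator_eq]
    show (⟨0,0,_⟩ : G k) = ⟨0,0,0⟩
    simp [xG, zG]
  have hyz : ⁅(yG : G k), (zG : G k)⁆ = 1 := by
    rw [commutator_eq]
    show (⟨0,0,_⟩ : G k) = ⟨0,0,0⟩
    simp [yG, zG]
  simp only [redeiRels, Set.mem_insert_iff, Set.mem_singleton_iff] at hw
  rcases hw with rfl | rfl | rfl | rfl | rfl
  · rw [map_pow, hlx]; exact hxp
  · rw [map_pow, hly]; exact hyp
  · rw [map_pow, map_commutatorElement, hlx, hly, comm_xy]; exact hz2
  · rw [map_commutatorElement, map_commutatorElement, hlx, hly, comm_xy]; exact hxz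
  · rw [map_commutatorElement, map_commutatorElement, hlx, hly, comm_xy]; exact hyz

def φD : RedeiGroup (k+1) (k+1) →* G k := PresentedGroup.toGroup (hrels k)

lemma phi_x : φD k X = xG := PresentedGroup.toGroup.of (hrels k)
lemma phi_y : φD k Y = yG := PresentedGroup.toGroup.of (hrels k)
lemma phi_z : φD k Z = zG := by
  show φD k ⁅X, Y⁆ = zG
  rw [map_commutatorElement, phi_x, phi_y, comm_xy]

lemma phi_nf (a b c : ℕ) :
    φD k (X^a * Y^b * Z^c) = ⟨(a : ZMod (2^(k+1))), (b : ZMod (2^(k+1))), (c : ZMod 2)⟩ := by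
  rw [map_mul, map_mul, map_pow, map_pow, map_pow, phi_x, phi_y, phi_z,
    xG_pow, yG_pow, zG_pow]
  simp only [mul_def, G.mk.injEq]
  refine ⟨by ring, by ring, ?_⟩
  rw [map_zero]
  ring

lemma phi_bij : Function.Bijective (φD k) := by
  constructor
  · apply (injective_iff_map_eq_one (φD k)).2
    intro g hg
    obtain ⟨a, b, c, rfl⟩ := normal_form_D g
    rw [phi_nf, one_def, G.mk.injEq] at hg
    obtain ⟨h1, h2, h3⟩ := hg
    obtain ⟨m, rfl⟩ := (ZMod.natCast_eq_zero_iff a (2^(k+1))).1 h1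
    obtain ⟨n, rfl⟩ := (ZMod.natCast_eq_zero_iff b (2^(k+1))).1 h2
    obtain ⟨l, rfl⟩ := (ZMod.natCast_eq_zero_iff c 2).1 h3
    rw [pow_mul, pow_mul, pow_mul, hX, hY, hZ2, one_pow, one_pow, one_pow,
      one_mul, one_mul]
  · intro g
    refine ⟨X^(g.a.val) * Y^(g.b.val) * Z^(g.c.val), ?_⟩
    rw [phi_nf]
    refine G.ext ?_ ?_ ?_ <;>
      simp only [ZMod.natCast_val, ZMod.cast_id]

noncomputable def eD : RedeiGroup (k+1) (k+1) ≃* G k :=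
  MulEquiv.ofBijective (φD k) (phi_bij k)

lemma eD_apply (g : RedeiGroup (k+1) (k+1)) : eD k g = φD k g := rfl

end Glue
end S14

theorem stmt14 (r : ℕ) (hr : 2 ≤ r) (α : MulAut (RedeiGroup r r))
    (hα : orderOf α = 3) :
    Dz r r ∈ Subgroup.center (RedeiGroup r r) ∧ Dz r r ≠ 1 ∧ α (Dz r r) = Dz r r ∧
    ∀ g ∈ Subgroup.center (RedeiGroup r r), α g = g → g = 1 ∨ g = Dz r r := by
  obtain ⟨k, rfl⟩ : ∃ k, r = k + 1 := ⟨r - 1, by omega⟩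
  clear hr
  set e := S14.eD k with he
  have he_z : e (Dz (k+1) (k+1)) = S14.G.zG := S14.phi_z k
  set β : MulAut (S14.G k) := (MulAut.congr e) α with hβdef
  have hβapp : ∀ g, β (e g) = e (α g) := by
    intro g
    rw [hβdef, MulAut.congr_apply]
    simp
  have hβ : orderOf β = 3 := by
    rw [hβdef, MulEquiv.orderOf_eq, hα]
  have hz_fix : α (Dz (k+1) (k+1)) = Dz (k+1) (k+1) := by
    apply e.injective
    rw [← hβapp, he_z, S14.G.beta_z]
  refine ⟨?_, ?_, hz_fix, ?_⟩
  · rw [Subgroup.mem_center_iff]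
    intro g
    apply e.injective
    rw [map_mul, map_mul, he_z]
    exact (S14.G.zG_central (e g)).symm
  · intro h
    apply S14.G.zG_ne_one (k := k)
    rw [← he_z, h, map_one]
  · intro g _ hfix
    have hfg : β (e g) = e g := by rw [hβapp, hfix]
    rcases S14.G.fixed_in_ker β hβ (e g) hfg with h | h
    · left
      apply e.injective
      rw [h, map_one]
    · right
      apply e.injective
      rw [h, he_z]
end

section
/- Any automorphism of order 3 of the group C_{2^(r-1)} × C_{2^(r-1)} (r ≥ 2) is fixed-point-free, i.e., fixes only the identity. -/
theorem stmt15 (r : ℕ) (hr : 2 ≤ r)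
    (α : MulAut (Multiplicative (ZMod (2 ^ (r - 1))) ×
      Multiplicative (ZMod (2 ^ (r - 1)))))
    (hα : orderOf α = 3) :
    ∀ g, α g = g → g = 1 := by
  have hk : 1 ≤ r - 1 := by omega
  haveI : NeZero (2 ^ (r - 1)) := ⟨by positivity⟩
  -- cube roots of unity in ZMod (2^(r-1)) are trivial
  have cube : ∀ x : ZMod (2 ^ (r - 1)), x ^ 3 = 1 → x = 1 := by
    intro x h
    have hu : IsUnit x := IsUnit.of_mul_eq_one (x ^ 2) (by linear_combination h)
    obtain ⟨u, rfl⟩ := hu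
    have hu3 : u ^ 3 = 1 := Units.ext (by push_cast [h]; rfl)
    have h1 : orderOf u ∣ 3 := orderOf_dvd_of_pow_eq_one hu3
    have h2 : orderOf u ∣ Fintype.card (ZMod (2 ^ (r - 1)))ˣ := orderOf_dvd_card
    rw [ZMod.card_units_eq_totient, Nat.totient_prime_pow Nat.prime_two hk] at h2
    have h3 : orderOf u ∣ Nat.gcd 3 (2 ^ (r - 1 - 1) * (2 - 1)) := Nat.dvd_gcd h1 h2
    have h4 : Nat.gcd 3 (2 ^ (r - 1 - 1) * (2 - 1)) = 1 := by
      have h5 : Nat.Coprime 3 2 := by decide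
      simpa using Nat.Coprime.pow_right (r - 1 - 1) h5
    rw [h4, Nat.dvd_one, orderOf_eq_one_iff] at h3
    simp [h3]
  -- parity detection
  set π : ZMod (2 ^ (r - 1)) →+* ZMod 2 :=
    ZMod.castHom (dvd_pow_self 2 (by omega : r - 1 ≠ 0)) (ZMod 2) with hπ
  have unit_of : ∀ x : ZMod (2 ^ (r - 1)), π x ≠ 0 → IsUnit x := by
    intro x h
    have hx : ((x.val : ℕ) : ZMod (2 ^ (r - 1))) = x := ZMod.natCast_rightInverse x
    rw [← hx, ZMod.isUnit_iff_coprime]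
    rw [← hx, map_natCast] at h
    have h2 : ¬ (2 ∣ x.val) := by
      rw [← ZMod.natCast_eq_zero_iff]; exact h
    exact Nat.Coprime.pow_right _
      (Nat.Coprime.symm ((Nat.Prime.coprime_iff_not_dvd Nat.prime_two).mpr h2))
  -- the additive endomorphism
  set F : (ZMod (2 ^ (r - 1)) × ZMod (2 ^ (r - 1))) →+
      (ZMod (2 ^ (r - 1)) × ZMod (2 ^ (r - 1))) :=
    AddMonoidHom.mk' (fun p =>
      ((α (Multiplicative.ofAdd p.1, Multiplicative.ofAdd p.2)).1.toAdd,
       (α (Multiplicative.ofAdd p.1, Multiplicative.ofAdd p.2)).2.toAdd))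
      (fun p q => by
        simp only [Prod.fst_add, Prod.snd_add, ofAdd_add, ← Prod.mk_mul_mk, map_mul,
          Prod.fst_mul, Prod.snd_mul, toAdd_mul, Prod.mk_add_mk]) with hFdef
  have hF : ∀ x : Multiplicative (ZMod (2 ^ (r - 1))) × Multiplicative (ZMod (2 ^ (r - 1))),
      F (x.1.toAdd, x.2.toAdd) = ((α x).1.toAdd, (α x).2.toAdd) := fun x => rfl
  set e := F.toZModLinearMap (2 ^ (r - 1)) with hedef
  have hecoe : ∀ p, e p = F p := fun p => rfl
  -- α ^ 3 = 1
  have hα3 : α ^ 3 = 1 := by rw [← hα]; exact pow_orderOf_eq_one α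
  have hgen : ∀ x, α (α (α x)) = x := by
    intro x
    have h3 : (α ^ 3) x = x := by rw [hα3]; rfl
    rw [pow_succ, pow_succ, pow_one, MulAut.mul_apply, MulAut.mul_apply] at h3
    exact h3
  have he3 : e ^ 3 = 1 := by
    apply LinearMap.ext
    intro p
    rw [pow_succ, pow_succ, pow_one, Module.End.mul_apply, Module.End.mul_apply, Module.End.one_apply]
    show F (F (F p)) = p
    exact congrArg (fun y => (Multiplicative.toAdd y.1, Multiplicative.toAdd y.2))
      (hgen (Multiplicative.ofAdd p.1, Multiplicative.ofAdd p.2))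
  -- the matrix
  set Φ := LinearMap.toMatrixAlgEquiv (Module.Basis.finTwoProd (ZMod (2 ^ (r - 1)))) with hΦ
  set M := Φ e with hM
  have hM3 : M ^ 3 = 1 := by rw [hM, ← map_pow, he3, map_one]
  have hd : M.det = 1 := by
    apply cube
    rw [← Matrix.det_pow, hM3, Matrix.det_one]
  set t := M.trace with ht
  -- Cayley-Hamilton for 2x2
  have CH : M ^ 2 - t • M + M.det • 1 = 0 := by
    show M ^ 2 - M.trace • M + M.det • 1 = 0
    ext i j
    fin_cases i <;> fin_cases j <;>
      simp [pow_two, Matrix.mul_apply, Fin.sum_univ_succ, Matrix.trace_fin_two,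
        Matrix.det_fin_two, Matrix.one_apply] <;> ring
  have h2 : M ^ 2 = t • M - 1 := by
    rw [hd, one_smul] at CH
    apply sub_eq_zero.mp
    calc M ^ 2 - (t • M - 1) = M ^ 2 - t • M + 1 := by abel
      _ = 0 := CH
  have h3 : (1 : Matrix (Fin 2) (Fin 2) (ZMod (2 ^ (r - 1)))) = (t * t - 1) • M - t • 1 := by
    calc (1 : Matrix (Fin 2) (Fin 2) (ZMod (2 ^ (r - 1)))) = M ^ 3 := hM3.symm
      _ = M ^ 2 * M := by rw [pow_succ]
      _ = (t • M - 1) * M := by rw [h2]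
      _ = t • M ^ 2 - M := by rw [sub_mul, smul_mul_assoc, one_mul, ← pow_two]
      _ = t • (t • M - 1) - M := by rw [h2]
      _ = (t * t - 1) • M - t • 1 := by
          rw [smul_sub, smul_smul]
          module
  have h5 : (t * t - 1) • M = (t + 1) • (1 : Matrix (Fin 2) (Fin 2) (ZMod (2 ^ (r - 1)))) := by
    rw [eq_sub_iff_add_eq] at h3
    rw [← h3, add_smul, one_smul]
    abel
  -- α is not the identity
  have hαne : α ≠ 1 := by
    intro h; rw [h, orderOf_one] at hα; exact absurd hα (by norm_num)
  have hMne : M ≠ 1 := by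
    intro h
    apply hαne
    have he1 : e = 1 := by
      apply Φ.injective
      rw [← hM, h, map_one]
    apply MulEquiv.ext
    intro x
    have h2 : F (x.1.toAdd, x.2.toAdd) = (x.1.toAdd, x.2.toAdd) := by
      rw [← hecoe, he1, Module.End.one_apply]
    have c1' : (α x).1.toAdd = x.1.toAdd := (Prod.ext_iff.mp h2).1
    have c2' : (α x).2.toAdd = x.2.toAdd := (Prod.ext_iff.mp h2).2
    have c1 : (α x).1 = x.1 := Multiplicative.toAdd.injective c1'
    have c2 : (α x).2 = x.2 := Multiplicative.toAdd.injective c2'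
    exact Prod.ext c1 c2
  -- case split on parity of trace
  have hcases : π t = 0 ∨ π t = 1 := by
    have : ∀ y : ZMod 2, y = 0 ∨ y = 1 := by decide
    exact this (π t)
  have hMunit : IsUnit (M - 1) := by
    rcases hcases with hc | hc
    · -- even trace: M is scalar, contradiction
      exfalso
      have hu : IsUnit (t * t - 1) := by
        apply unit_of
        simp [map_sub, map_mul, hc]
      obtain ⟨u, hu⟩ := hu
      have hMscalar : M = ((↑u⁻¹ : ZMod (2 ^ (r - 1))) * (t + 1)) • 1 := by
        have h6 := congrArg (fun N => (↑u⁻¹ : ZMod (2 ^ (r - 1))) • N) h5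
        simp only [smul_smul, ← hu, Units.inv_mul, one_smul] at h6
        exact h6
      set c := (↑u⁻¹ : ZMod (2 ^ (r - 1))) * (t + 1) with hc'
      have hc3 : c ^ 3 = 1 := by
        have h1 : M ^ 3 = c ^ 3 • 1 := by rw [hMscalar, smul_pow, one_pow]
        rw [hM3] at h1
        have := congrFun (congrFun h1 0) 0
        simpa using this.symm
      have hc1 : c = 1 := cube c hc3
      apply hMne
      rw [hMscalar, hc1, one_smul]
    · -- odd trace: det (M - 1) is a unit
      rw [Matrix.isUnit_iff_isUnit_det]
      have hdet : (M - 1).det = 2 - t := by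
        rw [Matrix.det_fin_two]
        rw [Matrix.det_fin_two] at hd
        rw [ht, Matrix.trace_fin_two]
        simp only [Matrix.sub_apply, Matrix.one_apply_eq, Matrix.one_apply_ne (by decide : (0 : Fin 2) ≠ 1), Matrix.one_apply_ne (by decide : (1 : Fin 2) ≠ 0), sub_zero]
        linear_combination hd
      rw [hdet]
      apply unit_of
      have : π (2 - t) = 2 - π t := by rw [map_sub, map_ofNat]
      rw [this, hc]
      decide
  -- transfer to the endomorphism
  have hEunit : IsUnit (e - 1) := by
    have h1 : Φ (e - 1) = M - 1 := by rw [map_sub, map_one, hM]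
    have := hMunit.map Φ.symm.toAlgHom
    rwa [← h1, AlgEquiv.toAlgHom_apply, AlgEquiv.symm_apply_apply] at this
  have hbij := (Module.End.isUnit_iff (e - 1)).mp hEunit
  intro g hg
  have hp : (e - 1) (g.1.toAdd, g.2.toAdd) = (e - 1) 0 := by
    rw [map_zero, LinearMap.sub_apply, Module.End.one_apply]
    have h1 : e (g.1.toAdd, g.2.toAdd) = (g.1.toAdd, g.2.toAdd) := by
      rw [hecoe, hF g, hg]
    rw [h1, sub_self]
  have hp0 := hbij.injective hp
  have h1 : g.1.toAdd = 0 := (Prod.ext_iff.mp hp0).1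
  have h2 : g.2.toAdd = 0 := (Prod.ext_iff.mp hp0).2
  ext
  · exact h1
  · exact h2
end

section
/- Let D = ⟨x, y | x^(2^r) = y^(2^r) = [x,y]² = [x,[x,y]] = [y,[x,y]] = 1⟩ with r ≥ 2, and let α ∈ Aut(D) have order 3. Then the restriction of α to the center Z(D) is an automorphism of Z(D) of order 3. -/
open scoped commutatorElement

namespace R16

@[ext] structure Md (n : ℕ) where
  a : ZMod (2*n)
  b : ZMod (2*n)
  c : ZMod 2

variable {n : ℕ}

def f (n : ℕ) : ZMod (2*n) →+* ZMod 2 := ZMod.castHom ⟨n, rfl⟩ (ZMod 2)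

lemma f_eq_zero_iff [NeZero (2*n)] (u : ZMod (2*n)) : f n u = 0 ↔ 2 ∣ u.val := by
  rw [f, ZMod.castHom_apply, ← ZMod.natCast_val, ZMod.natCast_eq_zero_iff]

instance : Mul (Md n) := ⟨fun g h => ⟨g.a + h.a, g.b + h.b, g.c + h.c + f n g.b * f n h.a⟩⟩
instance : One (Md n) := ⟨⟨0, 0, 0⟩⟩
instance : Inv (Md n) := ⟨fun g => ⟨-g.a, -g.b, g.c + f n g.a * f n g.b⟩⟩

@[simp] lemma mul_a (g h : Md n) : (g * h).a = g.a + h.a := rfl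
@[simp] lemma mul_b (g h : Md n) : (g * h).b = g.b + h.b := rfl
@[simp] lemma mul_c (g h : Md n) : (g * h).c = g.c + h.c + f n g.b * f n h.a := rfl
@[simp] lemma one_a : (1 : Md n).a = 0 := rfl
@[simp] lemma one_b : (1 : Md n).b = 0 := rfl
@[simp] lemma one_c : (1 : Md n).c = 0 := rfl
@[simp] lemma inv_a (g : Md n) : (g⁻¹).a = -g.a := rfl
@[simp] lemma inv_b (g : Md n) : (g⁻¹).b = -g.b := rfl
@[simp] lemma inv_c (g : Md n) : (g⁻¹).c = g.c + f n g.a * f n g.b := rfl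

@[simp] lemma zmod2_add_self (x : ZMod 2) : x + x = 0 := by revert x; decide

lemma two_eq_zero : ∀ x : ZMod 2, x * 2 = 0 := by decide

instance : Group (Md n) where
  mul_assoc g h k := by ext <;> simp <;> ring
  one_mul g := by ext <;> simp
  mul_one g := by ext <;> simp
  inv_mul_cancel g := by
    ext <;> simp
    ring_nf
    exact two_eq_zero g.c

def xM (n : ℕ) : Md n := ⟨1, 0, 0⟩
def yM (n : ℕ) : Md n := ⟨0, 1, 0⟩
def zM (n : ℕ) : Md n := ⟨0, 0, 1⟩

@[simp] lemma xM_a : (xM n).a = 1 := rfl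
@[simp] lemma xM_b : (xM n).b = 0 := rfl
@[simp] lemma xM_c : (xM n).c = 0 := rfl
@[simp] lemma yM_a : (yM n).a = 0 := rfl
@[simp] lemma yM_b : (yM n).b = 1 := rfl
@[simp] lemma yM_c : (yM n).c = 0 := rfl
@[simp] lemma zM_a : (zM n).a = 0 := rfl
@[simp] lemma zM_b : (zM n).b = 0 := rfl
@[simp] lemma zM_c : (zM n).c = 1 := rfl

lemma zM_eq_comm : zM n = ⁅xM n, yM n⁆ := by
  ext <;> simp [commutatorElement_def] <;> ring_nf

lemma mem_center_iff (g : Md n) :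
    g ∈ Subgroup.center (Md n) ↔ f n g.a = 0 ∧ f n g.b = 0 := by
  rw [Subgroup.mem_center_iff]
  constructor
  · intro h
    constructor
    · have := congrArg Md.c (h (yM n))
      simpa using this.symm
    · have := congrArg Md.c (h (xM n))
      simpa using this
  · rintro ⟨ha, hb⟩ h
    ext <;> simp [ha, hb] <;> ring

lemma xM_pow (A : ℕ) : (xM n) ^ A = ⟨(A : ZMod (2*n)), 0, 0⟩ := by
  induction A with
  | zero => ext <;> simp
  | succ k ih => rw [pow_succ, ih]; ext <;> simp <;> push_cast <;> ring

lemma yM_pow (B : ℕ) : (yM n) ^ B = ⟨0, (B : ZMod (2*n)), 0⟩ := by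
  induction B with
  | zero => ext <;> simp
  | succ k ih => rw [pow_succ, ih]; ext <;> simp <;> push_cast <;> ring

lemma zM_pow (C : ℕ) : (zM n) ^ C = ⟨0, 0, (C : ZMod 2)⟩ := by
  induction C with
  | zero => ext <;> simp
  | succ k ih => rw [pow_succ, ih]; ext <;> simp <;> push_cast <;> ring

lemma eq_xyz [NeZero (2*n)] (g : Md n) :
    g = xM n ^ g.a.val * yM n ^ g.b.val * zM n ^ g.c.val := by
  rw [xM_pow, yM_pow, zM_pow]
  ext <;> simp [ZMod.natCast_rightInverse g.a, ZMod.natCast_rightInverse g.b,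
    ZMod.natCast_rightInverse g.c]

/-- cancellation of 3 when the modulus is a power of 2 -/
lemma three_cancel {k : ℕ} (hn : n = 2^k) (x : ZMod (2*n)) (h : x + x + x = 0) : x = 0 := by
  subst hn
  haveI : NeZero (2*2^k) := ⟨by positivity⟩
  have hx : ((3 * x.val : ℕ) : ZMod (2*2^k)) = 0 := by
    push_cast
    rw [ZMod.natCast_val, ZMod.cast_id]
    linear_combination h
  rw [ZMod.natCast_eq_zero_iff] at hx
  have hcop : Nat.Coprime (2*2^k) 3 := by
    have h2 : 2*2^k = 2^(k+1) := by ring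
    rw [h2]
    exact Nat.Coprime.pow_left _ (by decide)
  have hdvd : 2*2^k ∣ x.val := (Nat.Coprime.dvd_of_dvd_mul_left hcop hx)
  have : ((x.val : ℕ) : ZMod (2*2^k)) = 0 := (ZMod.natCast_eq_zero_iff _ _).mpr hdvd
  rwa [ZMod.natCast_rightInverse x] at this

lemma cube_one {k : ℕ} (hn : n = 2^k) (d : Md n) (ha : f n d.a = 0) (hb : f n d.b = 0)
    (h : d * d * d = 1) : d = 1 := by
  have h1 := congrArg Md.a h
  have h2 := congrArg Md.b h
  have h3 := congrArg Md.c h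
  simp [ha, hb] at h1 h2 h3
  ext <;> simp
  · exact three_cancel hn _ h1
  · exact three_cancel hn _ h2
  · -- c-component
    revert h3
    generalize d.c = t
    revert t
    decide


lemma md_aux {k : ℕ} (hk : 1 ≤ k) (hn : n = 2^k) (γ : Md n ≃* Md n)
    (h3 : ∀ g : Md n, γ (γ (γ g)) = g)
    (hfix : ∀ g : Md n, f n g.a = 0 → f n g.b = 0 → γ g = g) :
    ∀ g : Md n, γ g = g := by
  haveI : NeZero (2*n) := ⟨by subst hn; positivity⟩
  have z2 : ∀ t : ZMod 2, t = 0 ∨ t = 1 := by decide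
  -- H2 : if the image is "central", the element is fixed and central
  have H2 : ∀ g : Md n, f n (γ g).a = 0 → f n (γ g).b = 0 →
      γ g = g ∧ f n g.a = 0 ∧ f n g.b = 0 := by
    intro g h1 h2
    have hg : γ (γ g) = γ g := hfix _ h1 h2
    have he : γ g = g := γ.injective hg
    exact ⟨he, by rw [← he]; exact h1, by rw [← he]; exact h2⟩
  -- H1 : if the image has the same "coordinates mod 2", the element is fixed
  have H1 : ∀ g : Md n, f n (γ g).a = f n g.a → f n (γ g).b = f n g.b → γ g = g := by
    intro g h1 h2
    set d := g⁻¹ * γ g with hd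
    have hda : f n d.a = 0 := by simp [hd, h1]
    have hdb : f n d.b = 0 := by simp [hd, h2]
    have hfd : γ d = d := hfix d hda hdb
    have e1 : γ g = g * d := by rw [hd, mul_inv_cancel_left]
    have c1 : γ (g * d) = g * (d * d) := by
      rw [map_mul, hfd, e1, mul_assoc]
    have c2 : γ (g * (d * d)) = g * (d * (d * d)) := by
      rw [map_mul, map_mul, hfd, e1, mul_assoc, mul_assoc]
    have e3 : g * (d * (d * d)) = g * 1 := by
      rw [mul_one, ← c2, ← c1, ← e1]
      exact h3 g
    have hd1 : d = 1 := by
      apply cube_one hn d hda hdb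
      have h' := mul_left_cancel e3
      rwa [← mul_assoc] at h'
    rw [e1, hd1, mul_one]
  -- it suffices to fix the two generators
  suffices hxy : γ (xM n) = xM n ∧ γ (yM n) = yM n by
    intro g
    have hz : γ (zM n) = zM n := by
      rw [zM_eq_comm, map_commutatorElement, hxy.1, hxy.2, ← zM_eq_comm]
    conv_lhs => rw [eq_xyz g]
    rw [map_mul, map_mul, map_pow, map_pow, map_pow, hxy.1, hxy.2, hz, ← eq_xyz]
  rcases z2 (f n (γ (xM n)).a) with hua | hua <;> rcases z2 (f n (γ (xM n)).b) with hub | hub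
  · -- (0,0) : impossible
    exact absurd (H2 _ hua hub).2.1 (by simp)
  · -- u ≡ y : set m with γ x = y * m
    have hm1 : f n ((yM n)⁻¹ * γ (xM n)).a = 0 := by simp [hua]
    have hm2 : f n ((yM n)⁻¹ * γ (xM n)).b = 0 := by simp [hub]
    set m := (yM n)⁻¹ * γ (xM n) with hmdef
    have hfm : γ m = m := hfix m hm1 hm2
    have e1 : yM n * m = γ (xM n) := mul_inv_cancel_left _ _
    rcases z2 (f n (γ (yM n)).a) with hva | hva <;> rcases z2 (f n (γ (yM n)).b) with hvb | hvb
    · -- v (0,0) : impossible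
      exact absurd (H2 _ hva hvb).2.2 (by simp)
    · -- v ≡ y, same as u : impossible
      have h1 : f n (γ (xM n * (yM n)⁻¹)).a = 0 := by
        rw [map_mul, map_inv]; simp [hua, hva]
      have h2 : f n (γ (xM n * (yM n)⁻¹)).b = 0 := by
        rw [map_mul, map_inv]; simp [hub, hvb]
      exact absurd (H2 _ h1 h2).2.1 (by simp)
    · -- v ≡ x : contradiction from γ³ x = x
      have hn1 : f n ((xM n)⁻¹ * γ (yM n)).a = 0 := by simp [hva]
      have hn2 : f n ((xM n)⁻¹ * γ (yM n)).b = 0 := by simp [hvb]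
      set w := (xM n)⁻¹ * γ (yM n) with hwdef
      have hfw : γ w = w := hfix w hn1 hn2
      have e2 : xM n * w = γ (yM n) := mul_inv_cancel_left _ _
      exfalso
      have E := h3 (xM n)
      rw [← e1, map_mul, hfm, ← e2, map_mul, map_mul, hfw, hfm, ← e1] at E
      have := congrArg (fun g : Md n => f n g.a) E
      simp [hm1, hm2, hn1, hn2, hua, hva] at this
    · -- v ≡ xy : the hard case, uses r ≥ 2
      have hn1 : f n ((xM n * yM n)⁻¹ * γ (yM n)).a = 0 := by simp [hva]
      have hn2 : f n ((xM n * yM n)⁻¹ * γ (yM n)).b = 0 := by simp [hvb]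
      set w := (xM n * yM n)⁻¹ * γ (yM n) with hwdef
      have hfw : γ w = w := hfix w hn1 hn2
      have e2 : (xM n * yM n) * w = γ (yM n) := mul_inv_cancel_left _ _
      exfalso
      have E := h3 (xM n)
      rw [← e1, map_mul, hfm, ← e2, map_mul, map_mul, map_mul, hfw, hfm, ← e1, ← e2] at E
      -- b-component : 2 + 2 m.b + 2 w.b = 0 in ZMod (2n), impossible since 4 ∣ 2n
      have hb := congrArg Md.b E
      simp only [mul_b, yM_b, xM_b] at hb
      -- now  hb is an equation in ZMod (2*n)
      have h4 : (4:ℕ) ∣ 2*n := by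
        subst hn
        obtain ⟨j, rfl⟩ := Nat.exists_eq_add_of_le hk
        exact ⟨2^j, by rw [pow_add]; ring⟩
      have hM : 2 ∣ m.b.val := (f_eq_zero_iff m.b).mp hm2
      have hW : 2 ∣ w.b.val := (f_eq_zero_iff w.b).mp hn2
      rw [← ZMod.natCast_rightInverse m.b, ← ZMod.natCast_rightInverse w.b] at hb
      have hb' : ((1 + m.b.val + (0 + 1 + w.b.val) + w.b.val + m.b.val : ℕ) : ZMod (2*n)) = 0 := by
        push_cast
        linear_combination hb
      rw [ZMod.natCast_eq_zero_iff] at hb'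
      have hb4 := dvd_trans h4 hb'
      omega
  · -- u ≡ x : γ x = x
    have hgx : γ (xM n) = xM n := H1 _ (by simpa using hua) (by simpa using hub)
    rcases z2 (f n (γ (yM n)).a) with hva | hva <;> rcases z2 (f n (γ (yM n)).b) with hvb | hvb
    · -- v (0,0) : then γ y = y
      exact ⟨hgx, (H2 _ hva hvb).1⟩
    · -- v ≡ y : γ y = y
      exact ⟨hgx, H1 _ (by simpa using hva) (by simpa using hvb)⟩
    · -- v ≡ x : impossible
      have h1 : f n (γ (yM n * (xM n)⁻¹)).a = 0 := by
        rw [map_mul, map_inv]; simp [hva, hua]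
      have h2 : f n (γ (yM n * (xM n)⁻¹)).b = 0 := by
        rw [map_mul, map_inv]; simp [hvb, hub]
      have := (H2 _ h1 h2).2.1
      simp at this
    · -- v ≡ xy : contradiction
      have hn1 : f n ((xM n * yM n)⁻¹ * γ (yM n)).a = 0 := by simp [hva]
      have hn2 : f n ((xM n * yM n)⁻¹ * γ (yM n)).b = 0 := by simp [hvb]
      set w := (xM n * yM n)⁻¹ * γ (yM n) with hwdef
      have hfw : γ w = w := hfix w hn1 hn2
      have e2 : (xM n * yM n) * w = γ (yM n) := mul_inv_cancel_left _ _
      exfalso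
      have s1 : γ (γ (yM n)) = xM n * γ (yM n) * w := by
        conv_lhs => rw [← e2]
        rw [map_mul, map_mul, hgx, hfw]
      have s2 : γ (γ (γ (yM n))) = xM n * (xM n * γ (yM n) * w) * w := by
        rw [s1, map_mul, map_mul, hgx, hfw, s1]
      have E : xM n * (xM n * γ (yM n) * w) * w = yM n := by rw [← s2]; exact h3 (yM n)
      have := congrArg (fun g : Md n => f n g.a) E
      simp [hva, hn1] at this
  · -- u ≡ xy
    have hm1 : f n ((xM n * yM n)⁻¹ * γ (xM n)).a = 0 := by simp [hua]
    have hm2 : f n ((xM n * yM n)⁻¹ * γ (xM n)).b = 0 := by simp [hub]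
    set m := (xM n * yM n)⁻¹ * γ (xM n) with hmdef
    have hfm : γ m = m := hfix m hm1 hm2
    have e1 : (xM n * yM n) * m = γ (xM n) := mul_inv_cancel_left _ _
    rcases z2 (f n (γ (yM n)).a) with hva | hva <;> rcases z2 (f n (γ (yM n)).b) with hvb | hvb
    · exact absurd (H2 _ hva hvb).2.2 (by simp)
    · -- v ≡ y : contradiction from γ³ x = x
      have hn1 : f n ((yM n)⁻¹ * γ (yM n)).a = 0 := by simp [hva]
      have hn2 : f n ((yM n)⁻¹ * γ (yM n)).b = 0 := by simp [hvb]
      set w := (yM n)⁻¹ * γ (yM n) with hwdef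
      have hfw : γ w = w := hfix w hn1 hn2
      have e2 : yM n * w = γ (yM n) := mul_inv_cancel_left _ _
      exfalso
      have s1 : γ (γ (xM n)) = γ (xM n) * γ (yM n) * m := by
        conv_lhs => rw [← e1]
        rw [map_mul, map_mul, hfm]
      have t1 : γ (γ (yM n)) = γ (yM n) * w := by
        conv_lhs => rw [← e2]
        rw [map_mul, hfw]
      have s2 : γ (γ (γ (xM n))) = γ (xM n) * γ (yM n) * m * (γ (yM n) * w) * m := by
        rw [s1, map_mul, map_mul, hfm, s1, t1]
      have E : γ (xM n) * γ (yM n) * m * (γ (yM n) * w) * m = xM n := by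
        rw [← s2]; exact h3 (xM n)
      have := congrArg (fun g : Md n => f n g.b) E
      simp [hm2, hn2, hub, hvb] at this
    · -- v ≡ x : contradiction from γ³ y = y  (c-component)
      have hn1 : f n ((xM n)⁻¹ * γ (yM n)).a = 0 := by simp [hva]
      have hn2 : f n ((xM n)⁻¹ * γ (yM n)).b = 0 := by simp [hvb]
      set w := (xM n)⁻¹ * γ (yM n) with hwdef
      have hfw : γ w = w := hfix w hn1 hn2
      have e2 : xM n * w = γ (yM n) := mul_inv_cancel_left _ _
      exfalso
      have s1 : γ (γ (xM n)) = γ (xM n) * γ (yM n) * m := by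
        conv_lhs => rw [← e1]
        rw [map_mul, map_mul, hfm]
      have t1 : γ (γ (yM n)) = γ (xM n) * w := by
        conv_lhs => rw [← e2]
        rw [map_mul, hfw]
      have s2 : γ (γ (γ (yM n))) = γ (xM n) * γ (yM n) * m * w := by
        rw [t1, map_mul, hfw, s1]
      have E : γ (xM n) * γ (yM n) * m * w = yM n := by
        rw [← s2]; exact h3 (yM n)
      have hc := congrArg Md.c E
      simp only [mul_c, map_add, yM_c] at hc
      rw [hmdef, hwdef] at hc
      simp [hua, hub, hva, hvb] at hc
      ring_nf at hc
      revert hc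
      generalize (γ (xM n)).c = t1
      generalize (γ (yM n)).c = t2
      revert t1 t2
      decide
    · -- v ≡ xy, same as u : impossible
      have h1 : f n (γ (xM n * (yM n)⁻¹)).a = 0 := by
        rw [map_mul, map_inv]; simp [hua, hva]
      have h2 : f n (γ (xM n * (yM n)⁻¹)).b = 0 := by
        rw [map_mul, map_inv]; simp [hub, hvb]
      exact absurd (H2 _ h1 h2).2.1 (by simp)

section Dside

variable {r : ℕ}

local notation "GG" => RedeiGroup r r
local notation "X" => Dx r r
local notation "Y" => Dy r r
local notation "Z" => Dz r r

lemma rel_mk {w : FreeGroup (Fin 2)} (hw : w ∈ redeiRels r r) :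
    PresentedGroup.mk (redeiRels r r) w = 1 :=
  (QuotientGroup.eq_one_iff w).mpr (Subgroup.subset_normalClosure hw)

lemma Dx_mk : X = PresentedGroup.mk (redeiRels r r) gx := rfl
lemma Dy_mk : Y = PresentedGroup.mk (redeiRels r r) gy := rfl
lemma Dz_mk : Z = PresentedGroup.mk (redeiRels r r) ⁅gx, gy⁆ := by
  rw [Dz, map_commutatorElement]; rfl

lemma Dx_pow_rel : X ^ (2^r) = 1 := by
  rw [Dx_mk, ← map_pow]
  exact rel_mk (by simp [redeiRels])

lemma Dy_pow_rel : Y ^ (2^r) = 1 := by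
  rw [Dy_mk, ← map_pow]
  exact rel_mk (by simp [redeiRels])

lemma Dz_sq : Z ^ 2 = 1 := by
  rw [Dz_mk, ← map_pow]
  exact rel_mk (by simp [redeiRels])

lemma Dz_inv : Z⁻¹ = Z := by
  have h := Dz_sq (r := r)
  rw [pow_two] at h
  exact inv_eq_of_mul_eq_one_right h

lemma comm_xz : Commute X Z := by
  apply commutatorElement_eq_one_iff_commute.mp
  rw [Dz_mk, Dx_mk, ← map_commutatorElement]
  exact rel_mk (by simp [redeiRels])

lemma comm_yz : Commute Y Z := by
  apply commutatorElement_eq_one_iff_commute.mp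
  rw [Dz_mk, Dy_mk, ← map_commutatorElement]
  exact rel_mk (by simp [redeiRels])

lemma z_central : ∀ t : RedeiGroup r r, Commute t Z := by
  intro t
  have ht := PresentedGroup.generated_by (redeiRels r r) (Subgroup.centralizer {Z}) ?_ t
  · rw [Subgroup.mem_centralizer_iff] at ht
    exact (ht Z rfl).symm
  · intro j
    rw [Subgroup.mem_centralizer_iff]
    intro h hh
    rw [Set.mem_singleton_iff] at hh
    subst hh
    fin_cases j
    · exact (comm_xz (r := r)).symm.eq
    · exact (comm_yz (r := r)).symm.eq

lemma z_swap (t : RedeiGroup r r) (k : ℕ) : t * Z ^ k = Z ^ k * t :=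
  ((z_central t).pow_right k).eq

lemma yx_rel : Y * X = Z * (X * Y) := by
  have h1 : Z * (Y * X) = X * Y := by
    rw [Dz, commutatorElement_def]
    group
  have h2 : Y * X = Z⁻¹ * (X * Y) := eq_inv_mul_iff_mul_eq.mpr h1
  rwa [Dz_inv] at h2

lemma P1 (A : ℕ) : Y * X ^ A = Z ^ A * (X ^ A * Y) := by
  induction A with
  | zero => simp
  | succ k ih =>
      calc Y * X ^ (k+1) = (Y * X ^ k) * X := by rw [pow_succ, mul_assoc]
        _ = Z ^ k * (X ^ k * Y) * X := by rw [ih]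
        _ = Z ^ k * (X ^ k * (Y * X)) := by rw [mul_assoc, mul_assoc]
        _ = Z ^ k * (X ^ k * (Z * (X * Y))) := by rw [yx_rel]
        _ = Z ^ k * ((X ^ k * Z) * (X * Y)) := by rw [mul_assoc]
        _ = Z ^ k * ((Z * X ^ k) * (X * Y)) := by
              have hs : X ^ k * Z = Z * X ^ k := by
                have := z_swap (r := r) (X ^ k) 1
                rwa [pow_one] at this
              rw [hs]
        _ = Z ^ (k+1) * (X ^ (k+1) * Y) := by rw [pow_succ, pow_succ]; group

lemma P2 (B A : ℕ) : Y ^ B * X ^ A = Z ^ (B*A) * (X ^ A * Y ^ B) := by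
  induction B with
  | zero => simp
  | succ k ih =>
      calc Y ^ (k+1) * X ^ A = Y ^ k * (Y * X ^ A) := by rw [pow_succ, mul_assoc]
        _ = Y ^ k * (Z ^ A * (X ^ A * Y)) := by rw [P1]
        _ = (Y ^ k * Z ^ A) * (X ^ A * Y) := by rw [mul_assoc]
        _ = (Z ^ A * Y ^ k) * (X ^ A * Y) := by rw [z_swap]
        _ = Z ^ A * ((Y ^ k * X ^ A) * Y) := by group
        _ = Z ^ A * ((Z ^ (k*A) * (X ^ A * Y ^ k)) * Y) := by rw [ih]
        _ = Z ^ ((k+1)*A) * (X ^ A * Y ^ (k+1)) := by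
              rw [show (k+1)*A = A + k*A by ring, pow_add, pow_succ]
              group

/-- the product formula in the Rédei group -/
lemma form (A B C A' B' C' : ℕ) :
    (X ^ A * Y ^ B * Z ^ C) * (X ^ A' * Y ^ B' * Z ^ C') =
      X ^ (A + A') * Y ^ (B + B') * Z ^ (B * A' + (C + C')) := by
  calc (X ^ A * Y ^ B * Z ^ C) * (X ^ A' * Y ^ B' * Z ^ C')
      = X ^ A * Y ^ B * (Z ^ C * (X ^ A' * Y ^ B' * Z ^ C')) := by group
    _ = X ^ A * Y ^ B * ((X ^ A' * Y ^ B' * Z ^ C') * Z ^ C) := by rw [← z_swap]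
    _ = X ^ A * ((Y ^ B * X ^ A') * (Y ^ B' * (Z ^ C' * Z ^ C))) := by group
    _ = X ^ A * ((Z ^ (B * A') * (X ^ A' * Y ^ B)) * (Y ^ B' * (Z ^ C' * Z ^ C))) := by rw [P2]
    _ = (X ^ A * Z ^ (B * A')) * ((X ^ A' * Y ^ B) * (Y ^ B' * (Z ^ C' * Z ^ C))) := by group
    _ = (Z ^ (B * A') * X ^ A) * ((X ^ A' * Y ^ B) * (Y ^ B' * (Z ^ C' * Z ^ C))) := by
          rw [z_swap (X ^ A) (B * A')]
    _ = Z ^ (B * A') * (X ^ (A + A') * (Y ^ (B + B') * Z ^ (C' + C))) := by group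
    _ = (X ^ (A + A') * (Y ^ (B + B') * Z ^ (C' + C))) * Z ^ (B * A') := by rw [← z_swap]
    _ = X ^ (A + A') * Y ^ (B + B') * Z ^ (B * A' + (C + C')) := by group

lemma xpow_congr {i j : ℕ} (h : i ≡ j [MOD 2^r]) : X ^ i = X ^ j := by
  apply pow_eq_pow_iff_modEq.mpr
  exact h.of_dvd (orderOf_dvd_of_pow_eq_one Dx_pow_rel)

lemma ypow_congr {i j : ℕ} (h : i ≡ j [MOD 2^r]) : Y ^ i = Y ^ j := by
  apply pow_eq_pow_iff_modEq.mpr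
  exact h.of_dvd (orderOf_dvd_of_pow_eq_one Dy_pow_rel)

lemma zpow_congr {i j : ℕ} (h : i ≡ j [MOD 2]) : Z ^ i = Z ^ j := by
  apply pow_eq_pow_iff_modEq.mpr
  exact h.of_dvd (orderOf_dvd_of_pow_eq_one Dz_sq)

end Dside

section Iso

variable {r n : ℕ}

/-- the normal-form section `Md n → RedeiGroup r r` -/
def sig (r n : ℕ) (g : Md n) : RedeiGroup r r :=
  Dx r r ^ g.a.val * Dy r r ^ g.b.val * Dz r r ^ g.c.val

lemma f_val [NeZero (2*n)] (u : ZMod (2*n)) : ((u.val : ℕ) : ZMod 2) = f n u := by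
  rw [f, ZMod.castHom_apply, ZMod.natCast_val]

lemma sig_mul (h2n : 2*n = 2^r) (g h : Md n) :
    sig r n (g * h) = sig r n g * sig r n h := by
  haveI : NeZero (2*n) := ⟨by rw [h2n]; positivity⟩
  rw [sig, sig, sig, form]
  have ca : (g.a + h.a).val ≡ g.a.val + h.a.val [MOD 2^r] := by
    rw [← h2n, ZMod.val_add]
    exact Nat.mod_modEq _ _
  have cb : (g.b + h.b).val ≡ g.b.val + h.b.val [MOD 2^r] := by
    rw [← h2n, ZMod.val_add]
    exact Nat.mod_modEq _ _
  have cc : (g.c + h.c + f n g.b * f n h.a).val ≡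
      g.b.val * h.a.val + (g.c.val + h.c.val) [MOD 2] := by
    apply (ZMod.natCast_eq_natCast_iff _ _ _).mp
    push_cast
    rw [ZMod.natCast_rightInverse (g.c + h.c + f n g.b * f n h.a),
      ZMod.natCast_rightInverse g.c, ZMod.natCast_rightInverse h.c, f_val, f_val]
    ring
  rw [mul_a, mul_b, mul_c, xpow_congr ca, ypow_congr cb, zpow_congr cc]

lemma sig_one : sig r n 1 = 1 := by
  rw [sig]
  simp

/-- the section as a monoid hom -/
def sigHom (r n : ℕ) (h2n : 2*n = 2^r) : Md n →* RedeiGroup r r where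
  toFun := sig r n
  map_one' := sig_one
  map_mul' := sig_mul h2n

/-- generator images for `phi` -/
def phiF (n : ℕ) : Fin 2 → Md n := ![xM n, yM n]

lemma zM_sq : (zM n) ^ 2 = 1 := by
  rw [zM_pow]
  have : ((2:ℕ) : ZMod 2) = 0 := by decide
  rw [this]
  rfl

lemma comm_xzM : Commute (xM n) (zM n) := by
  show _ * _ = _ * _
  ext <;> simp <;> ring

lemma comm_yzM : Commute (yM n) (zM n) := by
  show _ * _ = _ * _
  ext <;> simp <;> ring

lemma lift_rels (h2n : 2*n = 2^r) : ∀ w ∈ redeiRels r r, FreeGroup.lift (phiF n) w = 1 := by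
  have hgx : FreeGroup.lift (phiF n) gx = xM n := by
    rw [gx, FreeGroup.lift_apply_of, phiF]
    simp
  have hgy : FreeGroup.lift (phiF n) gy = yM n := by
    rw [gy, FreeGroup.lift_apply_of, phiF]
    simp
  have hgz : FreeGroup.lift (phiF n) ⁅gx, gy⁆ = zM n := by
    rw [map_commutatorElement, hgx, hgy, ← zM_eq_comm]
  intro w hw
  simp only [redeiRels, Set.mem_insert_iff, Set.mem_singleton_iff] at hw
  rcases hw with rfl | rfl | rfl | rfl | rfl
  · rw [map_pow, hgx, ← h2n, xM_pow]
    ext <;> simp [ZMod.natCast_self]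
  · rw [map_pow, hgy, ← h2n, yM_pow]
    ext <;> simp [ZMod.natCast_self]
  · rw [map_pow, hgz]
    exact zM_sq
  · rw [map_commutatorElement, hgx, hgz]
    exact commutatorElement_eq_one_iff_commute.mpr comm_xzM
  · rw [map_commutatorElement, hgy, hgz]
    exact commutatorElement_eq_one_iff_commute.mpr comm_yzM

/-- the homomorphism onto the model -/
def phi (r n : ℕ) (h2n : 2*n = 2^r) : RedeiGroup r r →* Md n :=
  PresentedGroup.toGroup (lift_rels h2n)

lemma phi_x (h2n : 2*n = 2^r) : phi r n h2n (Dx r r) = xM n := by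
  rw [Dx, phi, PresentedGroup.toGroup.of, phiF]
  simp

lemma phi_y (h2n : 2*n = 2^r) : phi r n h2n (Dy r r) = yM n := by
  rw [Dy, phi, PresentedGroup.toGroup.of, phiF]
  simp

lemma phi_z (h2n : 2*n = 2^r) : phi r n h2n (Dz r r) = zM n := by
  rw [Dz, map_commutatorElement, phi_x, phi_y, ← zM_eq_comm]

lemma phi_sig (h2n : 2*n = 2^r) (g : Md n) : phi r n h2n (sig r n g) = g := by
  haveI : NeZero (2*n) := ⟨by rw [h2n]; positivity⟩
  rw [sig, map_mul, map_mul, map_pow, map_pow, map_pow, phi_x, phi_y, phi_z, ← eq_xyz]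

lemma sig_surj (h2n : 2*n = 2^r) (hr : 2 ≤ r) : Function.Surjective (sigHom r n h2n) := by
  haveI : NeZero (2*n) := ⟨by rw [h2n]; positivity⟩
  haveI : Fact (1 < 2*n) := ⟨by
    rw [h2n]
    calc 1 < 2^2 := by norm_num
      _ ≤ 2^r := Nat.pow_le_pow_right (by norm_num) hr⟩
  have hrange : (sigHom r n h2n).range = ⊤ := by
    rw [eq_top_iff, ← PresentedGroup.closure_range_of (redeiRels r r), Subgroup.closure_le]
    rintro t ⟨i, rfl⟩
    fin_cases i
    · refine ⟨⟨1, 0, 0⟩, ?_⟩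
      show sig r n ⟨1, 0, 0⟩ = _
      rw [sig]
      simp [ZMod.val_one]
      rfl
    · refine ⟨⟨0, 1, 0⟩, ?_⟩
      show sig r n ⟨0, 1, 0⟩ = _
      rw [sig]
      simp [ZMod.val_one]
      rfl
  intro g
  have : g ∈ (sigHom r n h2n).range := by rw [hrange]; trivial
  exact this

lemma phi_bij (h2n : 2*n = 2^r) (hr : 2 ≤ r) : Function.Bijective (phi r n h2n) := by
  constructor
  · intro s t hst
    obtain ⟨u, hu⟩ := sig_surj h2n hr s
    obtain ⟨v, hv⟩ := sig_surj h2n hr t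
    have hu' : sig r n u = s := hu
    have hv' : sig r n v = t := hv
    have : u = v := by
      rw [← phi_sig h2n u, ← phi_sig h2n v, hu', hv', hst]
    rw [← hu', ← hv', this]
  · intro g
    exact ⟨sig r n g, phi_sig h2n g⟩

end Iso

lemma center_map {G H : Type*} [Group G] [Group H] (e : G ≃* H) (g : G)
    (hg : g ∈ Subgroup.center G) : e g ∈ Subgroup.center H := by
  rw [Subgroup.mem_center_iff] at hg ⊢
  intro h
  have := congrArg e (hg (e.symm h))
  simpa [map_mul] using this

end R16

theorem stmt16 (r : ℕ) (hr : 2 ≤ r) (α : MulAut (RedeiGroup r r))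
    (hα : orderOf α = 3) :
    (∀ g ∈ Subgroup.center (RedeiGroup r r), α g ∈ Subgroup.center (RedeiGroup r r)) ∧
    ∀ β : MulAut (Subgroup.center (RedeiGroup r r)),
      (∀ g : Subgroup.center (RedeiGroup r r), (β g : RedeiGroup r r) = α (g : RedeiGroup r r)) →
      orderOf β = 3 := by
  have hα3 : ∀ t : RedeiGroup r r, α (α (α t)) = t := by
    intro t
    have h1 : α ^ 3 = 1 := by rw [← hα]; exact pow_orderOf_eq_one α
    have h2 := DFunLike.congr_fun h1 t
    rw [pow_succ, pow_succ, pow_one, MulAut.mul_apply, MulAut.mul_apply] at h2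
    simpa using h2
  constructor
  · intro g hg
    rw [Subgroup.mem_center_iff] at hg ⊢
    intro h
    have := congrArg α (hg (α.symm h))
    simpa [map_mul] using this
  · intro β hβ
    have hβ3 : β ^ 3 = 1 := by
      ext g
      rw [pow_succ, pow_succ, pow_one, MulAut.mul_apply, MulAut.mul_apply]
      have : ((β (β (β g)) : Subgroup.center (RedeiGroup r r)) : RedeiGroup r r)
          = ((g : Subgroup.center (RedeiGroup r r)) : RedeiGroup r r) := by
        rw [hβ, hβ, hβ, hα3]
      have h4 := Subtype.ext this
      simpa using h4
    have hdvd : orderOf β ∣ 3 := orderOf_dvd_of_pow_eq_one hβ3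
    rcases Nat.prime_three.eq_one_or_self_of_dvd _ hdvd with h1 | h3
    · exfalso
      have hβ1 : β = 1 := orderOf_eq_one_iff.mp h1
      have hfixD : ∀ g ∈ Subgroup.center (RedeiGroup r r), α g = g := by
        intro g hg
        have := hβ ⟨g, hg⟩
        rw [hβ1] at this
        simpa using this.symm
      set n := 2 ^ (r - 1) with hn
      have h2n : 2 * n = 2 ^ r := by
        rw [hn, ← pow_succ']
        congr 1
        omega
      set e := MulEquiv.ofBijective (R16.phi r n h2n) (R16.phi_bij h2n hr) with he
      set γ : R16.Md n ≃* R16.Md n :=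
        MulEquiv.trans e.symm (MulEquiv.trans (α : RedeiGroup r r ≃* RedeiGroup r r) e) with hγdef
      have hγ : ∀ h : R16.Md n, γ h = e (α (e.symm h)) := fun _ => rfl
      have hγ3 : ∀ g : R16.Md n, γ (γ (γ g)) = g := by
        intro g
        rw [hγ, hγ, hγ, MulEquiv.symm_apply_apply, MulEquiv.symm_apply_apply, hα3,
          MulEquiv.apply_symm_apply]
      have hγfix : ∀ g : R16.Md n, R16.f n g.a = 0 → R16.f n g.b = 0 → γ g = g := by
        intro g ha hb
        have hc : e.symm g ∈ Subgroup.center (RedeiGroup r r) :=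
          R16.center_map e.symm g ((R16.mem_center_iff g).mpr ⟨ha, hb⟩)
        rw [hγ, hfixD _ hc, MulEquiv.apply_symm_apply]
      have hγ1 := R16.md_aux (k := r - 1) (by omega) hn γ hγ3 hγfix
      have hα1 : α = 1 := by
        ext t
        have h5 := hγ1 (e t)
        rw [hγ, MulEquiv.symm_apply_apply] at h5
        have h6 := e.injective h5
        simpa using h6
      rw [hα1] at hα
      simp at hα
    · exact h3
end

section
/- Every matrix C = [[c₁, c₂], [c₂, c₃]] ∈ ℤ^{2×2} that is symmetric positive definite with determinant 8 and elementary divisors 1 and 8 is equivalent (via C ↦ SCSᵀ for some S ∈ GL(2,ℤ)) to exactly one of [[1,0],[0,8]] and [[3,1],[1,3]]. -/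
/-- Two integer matrices are equivalent if one is obtained from the other by
`M ↦ S * M * Sᵀ` for some `S ∈ GL(2,ℤ)`. -/
def MatEquiv (M N : Matrix (Fin 2) (Fin 2) ℤ) : Prop :=
  ∃ S : Matrix (Fin 2) (Fin 2) ℤ, IsUnit S.det ∧ S * M * S.transpose = N

section Aux

lemma tr2_aux (a b c d : ℤ) : (!![a,b;c,d]).transpose = !![a,c;b,d] := by
  ext i j; fin_cases i <;> fin_cases j <;> simp

lemma matEquiv_trans_aux {M N P : Matrix (Fin 2) (Fin 2) ℤ}
    (h1 : MatEquiv M N) (h2 : MatEquiv N P) : MatEquiv M P := by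
  obtain ⟨S, hS, hSe⟩ := h1
  obtain ⟨T, hT, hTe⟩ := h2
  exact ⟨T * S, by simpa using hT.mul hS, by
    rw [Matrix.transpose_mul, ← hTe, ← hSe]; noncomm_ring⟩

lemma matEquiv_symm_aux {M N : Matrix (Fin 2) (Fin 2) ℤ}
    (h : MatEquiv M N) : MatEquiv N M := by
  obtain ⟨S, hS, hSe⟩ := h
  refine ⟨S⁻¹, ?_, ?_⟩
  · have h1 : S⁻¹ * S = 1 := Matrix.nonsing_inv_mul S hS
    have := congrArg Matrix.det h1
    rw [Matrix.det_mul, Matrix.det_one] at this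
    exact IsUnit.of_mul_eq_one _ this
  · rw [← hSe]
    have h1 : S⁻¹ * S = 1 := Matrix.nonsing_inv_mul S hS
    have h2 : S.transpose * (S⁻¹).transpose = 1 := by
      rw [← Matrix.transpose_mul, Matrix.nonsing_inv_mul S hS, Matrix.transpose_one]
    calc S⁻¹ * (S * M * S.transpose) * (S⁻¹).transpose
        = (S⁻¹ * S) * M * (S.transpose * (S⁻¹).transpose) := by noncomm_ring
      _ = M := by rw [h1, h2]; simp

lemma shear_eq_aux (a b c t : ℤ) :
    !![1,0;t,1] * !![a,b;b,c] * (!![1,0;t,1]).transpose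
      = !![a, b + t*a; b + t*a, c + 2*t*b + t*t*a] := by
  rw [tr2_aux, Matrix.mul_fin_two, Matrix.mul_fin_two]; congr 1 <;> ring

lemma swap_eq_aux (a b c : ℤ) :
    !![0,1;-1,0] * !![a,b;b,c] * (!![0,1;-1,0]).transpose = !![c, -b; -b, a] := by
  rw [tr2_aux, Matrix.mul_fin_two, Matrix.mul_fin_two]; congr 1 <;> ring

lemma flip_eq_aux (a b c : ℤ) :
    !![1,0;0,-1] * !![a,b;b,c] * (!![1,0;0,-1]).transpose = !![a, -b; -b, c] := by
  rw [tr2_aux, Matrix.mul_fin_two, Matrix.mul_fin_two]; congr 1 <;> ring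

lemma shear_equiv_aux (a b c t : ℤ) :
    MatEquiv !![a,b;b,c] !![a, b + t*a; b + t*a, c + 2*t*b + t*t*a] :=
  ⟨!![1,0;t,1], by rw [Matrix.det_fin_two_of]; simp, shear_eq_aux a b c t⟩

lemma swap_equiv_aux (a b c : ℤ) : MatEquiv !![a,b;b,c] !![c, -b; -b, a] :=
  ⟨!![0,1;-1,0], by rw [Matrix.det_fin_two_of]; simp, swap_eq_aux a b c⟩

lemma flip_equiv_aux (a b c : ℤ) : MatEquiv !![a,b;b,c] !![a, -b; -b, c] :=
  ⟨!![1,0;0,-1], by rw [Matrix.det_fin_two_of]; simp, flip_eq_aux a b c⟩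

/-- "Good" means equivalent to one of the two target forms. -/
def GoodAux (a b c : ℤ) : Prop :=
  MatEquiv !![a,b;b,c] !![1,0;0,8] ∨ MatEquiv !![a,b;b,c] !![3,1;1,3]

lemma good_of_equiv_aux {a b c a' b' c' : ℤ}
    (h : MatEquiv !![a,b;b,c] !![a',b';b',c']) (hg : GoodAux a' b' c') :
    GoodAux a b c :=
  hg.imp (matEquiv_trans_aux h) (matEquiv_trans_aux h)

lemma reduceGood_aux : ∀ n : ℕ, ∀ a b c : ℤ, a.natAbs ≤ n → 0 < a →
    a * c - b * b = 8 → (∀ d : ℤ, d ∣ a → d ∣ b → d ∣ c → IsUnit d) →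
    GoodAux a b c := by
  intro n
  induction n with
  | zero => intro a b c h ha; omega
  | succ n ih =>
    intro a b c hn ha hdet hprim
    -- choose T with B := b + T*a satisfying -a ≤ 2B ≤ a
    obtain ⟨T, B, hB, hB1, hB2⟩ :
        ∃ T B : ℤ, B = b + T * a ∧ -a ≤ 2 * B ∧ 2 * B ≤ a := by
      have h0 := Int.emod_nonneg b (show a ≠ 0 by omega)
      have h1 := Int.emod_lt_of_pos b ha
      have hmd : b % a = b + (-(b / a)) * a := by rw [Int.emod_def]; ring
      by_cases h : 2 * (b % a) ≤ a
      · exact ⟨-(b / a), b % a, hmd, by omega, h⟩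
      · exact ⟨-(b / a) - 1, b % a - a, by rw [hmd]; ring, by omega, by omega⟩
    obtain ⟨C2, hC2⟩ : ∃ C2 : ℤ, C2 = c + 2*T*b + T*T*a := ⟨_, rfl⟩
    have hdet2 : a * C2 - B * B = 8 := by
      rw [hB, hC2]; ring_nf; linarith [hdet]
    have hC2pos : 0 < C2 := by nlinarith [mul_self_nonneg B]
    have hprim2 : ∀ d : ℤ, d ∣ a → d ∣ B → d ∣ C2 → IsUnit d := by
      intro d hda hdB hdC2
      have hdb : d ∣ b := by
        have : b = B - T * a := by rw [hB]; ring
        rw [this]; exact dvd_sub hdB (hda.mul_left T)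
      refine hprim d hda hdb ?_
      have : c = C2 - 2*T*b - T*T*a := by rw [hC2]; ring
      rw [this]; exact dvd_sub (dvd_sub hdC2 ((hdb.mul_left (2*T)))) (hda.mul_left (T*T))
    have hstep : MatEquiv !![a,b;b,c] !![a,B;B,C2] := by
      have := shear_equiv_aux a b c T
      rwa [← hB, ← hC2] at this
    by_cases hlt : C2 < a
    · -- swap and recurse
      refine good_of_equiv_aux (matEquiv_trans_aux hstep (swap_equiv_aux a B C2)) ?_
      refine ih C2 (-B) a (by omega) hC2pos (by linarith [hdet2]; ) ?_
      intro d h1 h2 h3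
      exact hprim2 d h3 ((dvd_neg).mp h2) h1
    · -- reduced case
      push_neg at hlt
      have ha3 : a ≤ 3 := by
        nlinarith [mul_nonneg (by linarith : (0:ℤ) ≤ a - 2*B) (by linarith : (0:ℤ) ≤ a + 2*B),
          mul_le_mul_of_nonneg_left hlt ha.le,
          mul_nonneg (by linarith : (0:ℤ) ≤ a) (by linarith : (0:ℤ) ≤ a)]
      refine good_of_equiv_aux hstep ?_
      interval_cases a
      · -- a = 1
        have hB0 : B = 0 := by omega
        subst hB0
        have hc : C2 = 8 := by omega
        subst hc
        exact Or.inl ⟨1, by simp, by simp⟩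
      · -- a = 2
        have hb1 : -1 ≤ B := by omega
        have hb2 : B ≤ 1 := by omega
        interval_cases B
        · omega
        · -- B = 0, C2 = 4, contradicts primitivity
          exfalso
          have h4 : C2 = 4 := by omega
          have := hprim2 2 ⟨1, by ring⟩ ⟨0, by ring⟩ ⟨2, by omega⟩
          rw [Int.isUnit_iff] at this; omega
        · omega
      · -- a = 3
        have hb1 : -1 ≤ B := by omega
        have hb2 : B ≤ 1 := by omega
        interval_cases B
        · -- B = -1, C2 = 3
          have hc : C2 = 3 := by omega
          subst hc
          refine Or.inr (matEquiv_trans_aux (flip_equiv_aux 3 (-1) 3) ?_)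
          norm_num
          exact ⟨1, by simp, by simp⟩
        · omega
        · have hc : C2 = 3 := by omega
          subst hc
          exact Or.inr ⟨1, by simp, by simp⟩

lemma not_equiv_targets_aux : ¬ MatEquiv !![1,0;0,8] !![3,1;1,3] := by
  rintro ⟨S, hS, hSe⟩
  have h00 : (S * !![1,0;0,8] * S.transpose : Matrix (Fin 2) (Fin 2) ℤ) 0 0
      = S 0 0 * S 0 0 + 8 * (S 0 1 * S 0 1) := by
    simp [Matrix.mul_apply, Fin.sum_univ_succ]
    ring
  rw [hSe] at h00
  have h3 : S 0 0 * S 0 0 + 8 * (S 0 1 * S 0 1) = 3 := by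
    rw [← h00]; norm_num
  have hz : ∀ x : ZMod 8, x * x ≠ 3 := by decide
  apply hz (S 0 0 : ZMod 8)
  have := congrArg (fun x : ℤ => (x : ZMod 8)) h3
  push_cast at this
  have h8 : (8 : ZMod 8) = 0 := by decide
  rw [h8] at this
  simpa using this

end Aux

theorem stmt17 (C : Matrix (Fin 2) (Fin 2) ℤ)
    (hsymm : C 0 1 = C 1 0)
    (hpos : ∀ v : Fin 2 → ℤ, v ≠ 0 → 0 < dotProduct v (C.mulVec v))
    (hdet : C.det = 8)
    -- the elementary divisors are 1 and 8, i.e. the gcd of the entries is 1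
    (hgcd : Int.gcd (C 0 0) (Int.gcd (C 0 1) (C 1 1)) = 1) :
    Xor' (MatEquiv C !![1, 0; 0, 8]) (MatEquiv C !![3, 1; 1, 3]) := by
  have hCeq : C = !![C 0 0, C 0 1; C 0 1, C 1 1] := by
    have h := Matrix.eta_fin_two C
    rw [← hsymm] at h
    exact h
  have ha : 0 < C 0 0 := by
    have h := hpos ![1, 0] (by intro h; simpa using congrFun h 0)
    simpa [dotProduct, Matrix.mulVec, Fin.sum_univ_succ] using h
  have hd : C 0 0 * C 1 1 - C 0 1 * C 0 1 = 8 := by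
    rw [Matrix.det_fin_two, ← hsymm] at hdet
    exact hdet
  have hprim : ∀ d : ℤ, d ∣ C 0 0 → d ∣ C 0 1 → d ∣ C 1 1 → IsUnit d := by
    intro d h1 h2 h3
    have : d ∣ (Int.gcd (C 0 0) (Int.gcd (C 0 1) (C 1 1)) : ℤ) :=
      Int.dvd_coe_gcd h1 (Int.dvd_coe_gcd h2 h3)
    rw [hgcd] at this
    exact isUnit_of_dvd_one (by exact_mod_cast this)
  have hgood : GoodAux (C 0 0) (C 0 1) (C 1 1) :=
    reduceGood_aux (C 0 0).natAbs (C 0 0) (C 0 1) (C 1 1) le_rfl ha hd hprim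
  have hgood' : MatEquiv C !![1,0;0,8] ∨ MatEquiv C !![3,1;1,3] := by
    rw [hCeq]; exact hgood
  have hnot : ¬ (MatEquiv C !![1,0;0,8] ∧ MatEquiv C !![3,1;1,3]) := by
    rintro ⟨h1, h2⟩
    exact not_equiv_targets_aux (matEquiv_trans_aux (matEquiv_symm_aux h1) h2)
  rcases hgood' with h | h
  · exact Or.inl ⟨h, fun h2 => hnot ⟨h, h2⟩⟩
  · exact Or.inr ⟨h, fun h1 => hnot ⟨h1, h⟩⟩
end
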